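/- arXiv:2002.04010 — 5 statements merged into one kernel-verified Lean document; each statement's English description precedes it below -/
import Mathlib

section
/- Gronwall-type coupling bound (core of Steps 1–3 of the proof of the main theorem): Let C₀, K, R₀, c, ε, t₀ > 0. Suppose σ is continuously differentiable and the trajectories W_t (full training) and W^{(k)}_t (Taylorized training) satisfy, for all t ∈ [0, t₀]: (i) ‖W_t − W₀‖_F ≤ C₀ and ‖W^{(k)}_t − W₀‖_F ≤ C₀; (ii) ‖J(W)‖_F ≤ K and ‖J^{(k)}(W)‖_F ≤ K for all W with ‖W − W₀‖_F ≤ C₀, and both J and J^{(k)} are K-Lipschitz in Frobenius norm on this ball; (iii) ‖g_t‖ ≤ R₀ e^{−ct} and ‖g^{(k)}_t‖ ≤ R₀ e^{−ct}; (iv) ‖J(W_t) − J^{(k)}(W_t)‖_F ≤ ε. Then there exist constants a, b > 0 depending only on (η₀, K, R₀) such that for all t ∈ [0, t₀]: ‖W_t − W^{(k)}_t‖_F + ‖g_t − g^{(k)}_t‖ ≤ a · ε · e^{bt}. -/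
open scoped BigOperators RealInnerProductSpace
noncomputable section

/-- Weight space: `m` neurons, each in `ℝ^d`, with the Frobenius (ℓ²-of-ℓ²) norm. -/
abbrev Wts (d m : ℕ) : Type := PiLp 2 (fun _ : Fin m => EuclideanSpace ℝ (Fin d))

/-- Two-layer network `f_W(x) = m^{-1/2} ∑_r a_r σ(⟨w_r, x⟩)`. -/
def net (d m : ℕ) (σ : ℝ → ℝ) (a : Fin m → ℝ) (W : Wts d m)
    (x : EuclideanSpace ℝ (Fin d)) : ℝ :=
  (Real.sqrt m)⁻¹ * ∑ r : Fin m, a r * σ ⟪W r, x⟫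

/-- The `k`-th order Taylorized model of the network around `W₀`. -/
def netT (d m k : ℕ) (σ : ℝ → ℝ) (a : Fin m → ℝ) (W₀ : Wts d m) (W : Wts d m)
    (x : EuclideanSpace ℝ (Fin d)) : ℝ :=
  (Real.sqrt m)⁻¹ * ∑ r : Fin m, a r *
    ∑ j ∈ Finset.range (k + 1),
      (iteratedDeriv j σ ⟪W₀ r, x⟫ / (j.factorial : ℝ)) * ⟪W r - W₀ r, x⟫ ^ j

/-- Residual vector `g(W) ∈ ℝⁿ`, `g(W)ᵢ = f_W(xᵢ) - yᵢ`. -/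
def resid (d m n : ℕ) (σ : ℝ → ℝ) (a : Fin m → ℝ)
    (X : Fin n → EuclideanSpace ℝ (Fin d)) (y : EuclideanSpace ℝ (Fin n))
    (W : Wts d m) : EuclideanSpace ℝ (Fin n) :=
  WithLp.toLp 2 (fun i => net d m σ a W (X i) - y i)

/-- Residual vector `g⁽ᵏ⁾(W) ∈ ℝⁿ` of the Taylorized model. -/
def residT (d m n k : ℕ) (σ : ℝ → ℝ) (a : Fin m → ℝ) (W₀ : Wts d m)
    (X : Fin n → EuclideanSpace ℝ (Fin d)) (y : EuclideanSpace ℝ (Fin n))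
    (W : Wts d m) : EuclideanSpace ℝ (Fin n) :=
  WithLp.toLp 2 (fun i => netT d m k σ a W₀ W (X i) - y i)

/-- Squared loss `L(W) = ½‖g(W)‖²`. -/
def loss (d m n : ℕ) (σ : ℝ → ℝ) (a : Fin m → ℝ)
    (X : Fin n → EuclideanSpace ℝ (Fin d)) (y : EuclideanSpace ℝ (Fin n))
    (W : Wts d m) : ℝ :=
  (1 / 2) * ‖resid d m n σ a X y W‖ ^ 2

/-- Squared loss `L⁽ᵏ⁾(W) = ½‖g⁽ᵏ⁾(W)‖²` of the Taylorized model. -/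
def lossT (d m n k : ℕ) (σ : ℝ → ℝ) (a : Fin m → ℝ) (W₀ : Wts d m)
    (X : Fin n → EuclideanSpace ℝ (Fin d)) (y : EuclideanSpace ℝ (Fin n))
    (W : Wts d m) : ℝ :=
  (1 / 2) * ‖residT d m n k σ a W₀ X y W‖ ^ 2

/-- `i`-th row of the Jacobian `J(W)`: the gradient of `W ↦ f_W(xᵢ)`.
Its `r`-th block `Jrow ... W i r` is the gradient `∇_{w_r} f_W(xᵢ)`. -/
def Jrow (d m n : ℕ) (σ : ℝ → ℝ) (a : Fin m → ℝ)
    (X : Fin n → EuclideanSpace ℝ (Fin d)) (W : Wts d m) (i : Fin n) : Wts d m :=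
  gradient (fun V => net d m σ a V (X i)) W

/-- `i`-th row of the Taylorized Jacobian `J⁽ᵏ⁾(W)`. -/
def JrowT (d m n k : ℕ) (σ : ℝ → ℝ) (a : Fin m → ℝ) (W₀ : Wts d m)
    (X : Fin n → EuclideanSpace ℝ (Fin d)) (W : Wts d m) (i : Fin n) : Wts d m :=
  gradient (fun V => netT d m k σ a W₀ V (X i)) W



/-- Helper: a function `Fin n → ℝ` viewed as a Euclidean vector. -/
def evec {n : ℕ} (f : Fin n → ℝ) : EuclideanSpace ℝ (Fin n) := WithLp.toLp 2 f

variable {F : Type*} [NormedAddCommGroup F] [InnerProductSpace ℝ F]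

lemma euclid_norm {n : ℕ} (v : EuclideanSpace ℝ (Fin n)) :
    ‖v‖ = Real.sqrt (∑ i, v i ^ 2) := by
  rw [EuclideanSpace.norm_eq]
  congr 1
  exact Finset.sum_congr rfl fun i _ => by rw [Real.norm_eq_abs, sq_abs]

lemma aux_inner_vec_norm {n : ℕ} (u : Fin n → F) (v : F) :
    ‖evec (fun i => ⟪u i, v⟫)‖ ≤ Real.sqrt (∑ i, ‖u i‖ ^ 2) * ‖v‖ := by
  rw [euclid_norm]
  have h1 : ∑ i : Fin n, (evec (fun i => (⟪u i, v⟫ : ℝ)) i) ^ 2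
      ≤ (∑ i, ‖u i‖ ^ 2) * ‖v‖ ^ 2 := by
    rw [Finset.sum_mul]
    refine Finset.sum_le_sum fun i _ => ?_
    have h := abs_real_inner_le_norm (u i) v
    simp only [evec]
    nlinarith [abs_nonneg (⟪u i, v⟫ : ℝ), sq_abs (⟪u i, v⟫ : ℝ), norm_nonneg (u i), norm_nonneg v]
  calc Real.sqrt (∑ i : Fin n, (evec (fun i => (⟪u i, v⟫ : ℝ)) i) ^ 2)
      ≤ Real.sqrt ((∑ i, ‖u i‖ ^ 2) * ‖v‖ ^ 2) := Real.sqrt_le_sqrt h1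
    _ = Real.sqrt (∑ i, ‖u i‖ ^ 2) * ‖v‖ := by
        rw [Real.sqrt_mul (by positivity), Real.sqrt_sq (norm_nonneg v)]

lemma aux_norm_sum_smul {n : ℕ} (c : Fin n → ℝ) (u : Fin n → F) :
    ‖∑ i, c i • u i‖ ≤ Real.sqrt (∑ i, c i ^ 2) * Real.sqrt (∑ i, ‖u i‖ ^ 2) := by
  calc ‖∑ i, c i • u i‖ ≤ ∑ i, ‖c i • u i‖ := norm_sum_le _ _
    _ = ∑ i, |c i| * ‖u i‖ := by simp [norm_smul]
    _ ≤ Real.sqrt (∑ i, |c i| ^ 2) * Real.sqrt (∑ i, ‖u i‖ ^ 2) :=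
        Real.sum_mul_le_sqrt_mul_sqrt _ _ _
    _ = _ := by simp [sq_abs]

lemma aux_minkowski {n : ℕ} (u v : Fin n → F) :
    Real.sqrt (∑ i, ‖u i + v i‖ ^ 2)
      ≤ Real.sqrt (∑ i, ‖u i‖ ^ 2) + Real.sqrt (∑ i, ‖v i‖ ^ 2) := by
  have hpn : ‖evec (fun i => ‖u i‖)‖ = Real.sqrt (∑ i, ‖u i‖ ^ 2) := by
    rw [euclid_norm]; rfl
  have hqn : ‖evec (fun i => ‖v i‖)‖ = Real.sqrt (∑ i, ‖v i‖ ^ 2) := by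
    rw [euclid_norm]; rfl
  have key : Real.sqrt (∑ i, ‖u i + v i‖ ^ 2)
      ≤ ‖evec (fun i => ‖u i‖) + evec (fun i => ‖v i‖)‖ := by
    rw [euclid_norm]
    refine Real.sqrt_le_sqrt (Finset.sum_le_sum fun i _ => ?_)
    have h1 : (evec (fun i => ‖u i‖) + evec (fun i => ‖v i‖)) i = ‖u i‖ + ‖v i‖ := rfl
    rw [h1]
    nlinarith [norm_add_le (u i) (v i), norm_nonneg (u i), norm_nonneg (v i),
      norm_nonneg (u i + v i)]
  calc Real.sqrt (∑ i, ‖u i + v i‖ ^ 2)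
      ≤ ‖evec (fun i => ‖u i‖) + evec (fun i => ‖v i‖)‖ := key
    _ ≤ ‖evec (fun i => ‖u i‖)‖ + ‖evec (fun i => ‖v i‖)‖ := norm_add_le _ _
    _ = _ := by rw [hpn, hqn]

section Diff


variable {d m n k : ℕ}

lemma inner_proj_diff {d m : ℕ} (r : Fin m) (x : EuclideanSpace ℝ (Fin d)) (V : Wts d m) :
    DifferentiableAt ℝ (fun U : Wts d m => (⟪U r, x⟫ : ℝ)) V :=
  DifferentiableAt.inner ℝ
    ((PiLp.proj (𝕜 := ℝ) 2 (fun _ : Fin m => EuclideanSpace ℝ (Fin d)) r).differentiableAt)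
    (differentiableAt_const x)

lemma net_diff {σ : ℝ → ℝ} (hσ : ContDiff ℝ 1 σ) (a : Fin m → ℝ)
    (x : EuclideanSpace ℝ (Fin d)) (V : Wts d m) :
    DifferentiableAt ℝ (fun U => net d m σ a U x) V := by
  unfold net
  apply DifferentiableAt.const_mul
  refine DifferentiableAt.fun_sum fun r _ => DifferentiableAt.const_mul ?_ _
  exact ((hσ.differentiable one_ne_zero).differentiableAt).comp V (inner_proj_diff r x V)

lemma netT_diff (σ : ℝ → ℝ) (a : Fin m → ℝ) (W₀ : Wts d m)
    (x : EuclideanSpace ℝ (Fin d)) (V : Wts d m) :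
    DifferentiableAt ℝ (fun U => netT d m k σ a W₀ U x) V := by
  unfold netT
  apply DifferentiableAt.const_mul
  refine DifferentiableAt.fun_sum fun r _ => DifferentiableAt.const_mul ?_ _
  refine DifferentiableAt.fun_sum fun j _ => DifferentiableAt.const_mul ?_ _
  have : DifferentiableAt ℝ (fun U : Wts d m => (⟪U r - W₀ r, x⟫ : ℝ)) V := by
    refine DifferentiableAt.inner ℝ ?_ (differentiableAt_const x)
    exact ((PiLp.proj (𝕜 := ℝ) 2 (fun _ : Fin m => EuclideanSpace ℝ (Fin d)) r).differentiableAt).sub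
      (differentiableAt_const (W₀ r))
  exact this.pow j

lemma netT_center (σ : ℝ → ℝ) (a : Fin m → ℝ) (W₀ : Wts d m)
    (x : EuclideanSpace ℝ (Fin d)) :
    netT d m k σ a W₀ W₀ x = net d m σ a W₀ x := by
  unfold netT net
  congr 1
  refine Finset.sum_congr rfl fun r _ => ?_
  congr 1
  rw [Finset.sum_eq_single 0]
  · simp [iteratedDeriv_zero]
  · intro j _ hj
    have h0 : (⟪W₀ r - W₀ r, x⟫ : ℝ) = 0 := by simp
    rw [h0, zero_pow hj, mul_zero]
  · simp

end Diff

section Grad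

variable {E : Type*} [NormedAddCommGroup E] [InnerProductSpace ℝ E] [CompleteSpace E]

lemma hasGradientAt_halfSq {n : ℕ} (φ : Fin n → E → ℝ) (y : Fin n → ℝ) (V : E)
    (hφ : ∀ i, DifferentiableAt ℝ (φ i) V) :
    HasGradientAt (fun U => (1/2 : ℝ) * ∑ i, (φ i U - y i) ^ 2)
      (∑ i, (φ i V - y i) • gradient (φ i) V) V := by
  have hF : ∀ i : Fin n, HasFDerivAt (fun U => (φ i U - y i) ^ 2)
      (((2 : ℕ) * (φ i V - y i) ^ 1) •
        (InnerProductSpace.toDual ℝ E (gradient (φ i) V) : E →L[ℝ] ℝ)) V := by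
    intro i
    have h1 : HasFDerivAt (fun U => φ i U - y i)
        (InnerProductSpace.toDual ℝ E (gradient (φ i) V) : E →L[ℝ] ℝ) V :=
      ((hφ i).hasGradientAt.hasFDerivAt).sub_const (y i)
    exact (hasDerivAt_pow 2 (φ i V - y i)).comp_hasFDerivAt V h1
  have hsum := HasFDerivAt.fun_sum (fun i (_ : i ∈ Finset.univ) => hF i)
  have htot := hsum.const_mul (1/2 : ℝ)
  rw [hasGradientAt_iff_hasFDerivAt]
  refine htot.congr_fderiv ?_
  ext u
  simp only [map_sum, map_smul, ContinuousLinearMap.sum_apply, ContinuousLinearMap.smul_apply,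
    ContinuousLinearMap.coe_smul', Pi.smul_apply, InnerProductSpace.toDual_apply_apply,
    sum_inner, real_inner_smul_left, smul_eq_mul, pow_one]
  rw [Finset.mul_sum]
  exact Finset.sum_congr rfl fun i _ => by push_cast; ring

lemma hasDerivAt_residual {n : ℕ} (φ : Fin n → E → ℝ) (y : Fin n → ℝ)
    (W : ℝ → E) (W' : E) (t : ℝ) (hW : HasDerivAt W W' t)
    (hφ : ∀ i V, DifferentiableAt ℝ (φ i) V) :
    HasDerivAt (fun s => evec (fun i => φ i (W s) - y i))
      (evec (fun i => ⟪gradient (φ i) (W t), W'⟫)) t := by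
  have hcomp : ∀ i, HasDerivAt (fun s => φ i (W s) - y i)
      (⟪gradient (φ i) (W t), W'⟫ : ℝ) t := by
    intro i
    have h := ((hφ i (W t)).hasGradientAt.hasFDerivAt.comp_hasDerivAt t hW).sub_const (y i)
    simpa [InnerProductSpace.toDual_apply_apply] using h
  have hPi : HasDerivAt (fun s => (fun i => φ i (W s) - y i : ∀ _ : Fin n, ℝ))
      (fun i => (⟪gradient (φ i) (W t), W'⟫ : ℝ)) t := hasDerivAt_pi.2 hcomp
  exact ((PiLp.continuousLinearEquiv 2 ℝ (fun _ : Fin n => ℝ)).symm.toContinuousLinearMap.hasFDerivAt.comp_hasDerivAt t hPi)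

end Grad

section Core

variable {F : Type*} [NormedAddCommGroup F] [InnerProductSpace ℝ F]

lemma inner_vec_sub_eq {n : ℕ} (JW JTk : Fin n → F) (Ps Qs : F) (η₀ : ℝ) :
    evec (fun i => ⟪JW i, -(η₀ • Ps)⟫) - evec (fun i => ⟪JTk i, -(η₀ • Qs)⟫)
      = (-η₀) • (evec (fun i => ⟪JW i - JTk i, Ps⟫) + evec (fun i => ⟪JTk i, Ps - Qs⟫)) := by
  ext i
  show (⟪JW i, -(η₀ • Ps)⟫ : ℝ) - ⟪JTk i, -(η₀ • Qs)⟫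
      = -η₀ * ((⟪JW i - JTk i, Ps⟫ : ℝ) + ⟪JTk i, Ps - Qs⟫)
  rw [inner_neg_right, inner_neg_right, real_inner_smul_right, real_inner_smul_right,
    inner_sub_left, inner_sub_right]
  ring

lemma sum_smul_sub_sum_smul_bound {n : ℕ} (gW gTk : EuclideanSpace ℝ (Fin n))
    (JW JTW JTk : Fin n → F) {R₀ ε' L K : ℝ} (hR₀ : 0 ≤ R₀)
    (hgR : ‖gW‖ ≤ R₀)
    (hd : Real.sqrt (∑ i, ‖JW i - JTW i‖ ^ 2) ≤ ε')
    (hl : Real.sqrt (∑ i, ‖JTW i - JTk i‖ ^ 2) ≤ L)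
    (hb : Real.sqrt (∑ i, ‖JTk i‖ ^ 2) ≤ K) :
    ‖(∑ i, gW i • JW i) - ∑ i, gTk i • JTk i‖
      ≤ R₀ * ε' + R₀ * L + K * ‖gW - gTk‖ := by
  have hsplit : (∑ i, gW i • JW i) - ∑ i, gTk i • JTk i =
      ((∑ i, gW i • (JW i - JTW i)) + ∑ i, gW i • (JTW i - JTk i))
        + ∑ i, (gW i - gTk i) • JTk i := by
    rw [← Finset.sum_add_distrib, ← Finset.sum_add_distrib, ← Finset.sum_sub_distrib]
    refine Finset.sum_congr rfl fun i _ => ?_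
    simp only [smul_sub, sub_smul]
    abel
  have hgW2 : Real.sqrt (∑ i, gW i ^ 2) = ‖gW‖ := (euclid_norm gW).symm
  have hy2 : Real.sqrt (∑ i, (gW i - gTk i) ^ 2) = ‖gW - gTk‖ := by
    rw [euclid_norm (gW - gTk)]
    rfl
  have h1 : ‖∑ i, gW i • (JW i - JTW i)‖ ≤ R₀ * ε' := by
    have h := aux_norm_sum_smul (fun i => gW i) (fun i => JW i - JTW i)
    rw [hgW2] at h
    exact h.trans (mul_le_mul hgR hd (Real.sqrt_nonneg _) hR₀)
  have h2 : ‖∑ i, gW i • (JTW i - JTk i)‖ ≤ R₀ * L := by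
    have h := aux_norm_sum_smul (fun i => gW i) (fun i => JTW i - JTk i)
    rw [hgW2] at h
    exact h.trans (mul_le_mul hgR hl (Real.sqrt_nonneg _) hR₀)
  have h3 : ‖∑ i, (gW i - gTk i) • JTk i‖ ≤ K * ‖gW - gTk‖ := by
    have h := aux_norm_sum_smul (fun i => gW i - gTk i) JTk
    rw [hy2] at h
    refine h.trans ?_
    rw [mul_comm]
    exact mul_le_mul_of_nonneg_right hb (norm_nonneg _)
  calc ‖(∑ i, gW i • JW i) - ∑ i, gTk i • JTk i‖
      = ‖((∑ i, gW i • (JW i - JTW i)) + ∑ i, gW i • (JTW i - JTk i))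
          + ∑ i, (gW i - gTk i) • JTk i‖ := by rw [hsplit]
    _ ≤ ‖(∑ i, gW i • (JW i - JTW i)) + ∑ i, gW i • (JTW i - JTk i)‖
          + ‖∑ i, (gW i - gTk i) • JTk i‖ := norm_add_le _ _
    _ ≤ (‖∑ i, gW i • (JW i - JTW i)‖ + ‖∑ i, gW i • (JTW i - JTk i)‖)
          + ‖∑ i, (gW i - gTk i) • JTk i‖ := by
            gcongr
            exact norm_add_le _ _
    _ ≤ R₀ * ε' + R₀ * L + K * ‖gW - gTk‖ := by linarith

/-- The core abstract Gronwall argument. -/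
lemma abstract_gronwall {E : Type*} [NormedAddCommGroup E] [InnerProductSpace ℝ E] {n : ℕ}
    (η₀ K R₀ : ℝ) (hη₀ : 0 < η₀) (hK : 0 < K) (hR₀ : 0 < R₀)
    (ε t₀ : ℝ) (hε : 0 < ε)
    (W Wk : ℝ → E) (g gT : E → EuclideanSpace ℝ (Fin n)) (J JT : E → Fin n → E)
    (hW0 : W 0 = Wk 0) (hg0 : g (W 0) = gT (Wk 0))
    (hW' : ∀ s, HasDerivAt W (-(η₀ • ∑ i, g (W s) i • J (W s) i)) s)
    (hWk' : ∀ s, HasDerivAt Wk (-(η₀ • ∑ i, gT (Wk s) i • JT (Wk s) i)) s)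
    (hgW : ∀ s, HasDerivAt (fun u => g (W u))
      (evec fun i => ⟪J (W s) i, -(η₀ • ∑ j, g (W s) j • J (W s) j)⟫) s)
    (hgTWk : ∀ s, HasDerivAt (fun u => gT (Wk u))
      (evec fun i => ⟪JT (Wk s) i, -(η₀ • ∑ j, gT (Wk s) j • JT (Wk s) j)⟫) s)
    (hgR : ∀ s ∈ Set.Icc (0:ℝ) t₀, ‖g (W s)‖ ≤ R₀)
    (hJbW : ∀ s ∈ Set.Icc (0:ℝ) t₀, Real.sqrt (∑ i, ‖J (W s) i‖ ^ 2) ≤ K)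
    (hJTb : ∀ s ∈ Set.Icc (0:ℝ) t₀, Real.sqrt (∑ i, ‖JT (Wk s) i‖ ^ 2) ≤ K)
    (hlip : ∀ s ∈ Set.Icc (0:ℝ) t₀,
      Real.sqrt (∑ i, ‖JT (W s) i - JT (Wk s) i‖ ^ 2) ≤ K * ‖W s - Wk s‖)
    (hdiff : ∀ s ∈ Set.Icc (0:ℝ) t₀,
      Real.sqrt (∑ i, ‖J (W s) i - JT (W s) i‖ ^ 2) ≤ ε) :
    ∀ t ∈ Set.Icc (0:ℝ) t₀,
      ‖W t - Wk t‖ + ‖g (W t) - gT (Wk t)‖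
        ≤ (2 * (η₀ * R₀ * (2 * K + 1)) / (η₀ * (K + K ^ 2) * (2 * R₀ + 1))) * ε *
            Real.exp ((η₀ * (K + K ^ 2) * (2 * R₀ + 1)) * t) := by
  have hApos : (0:ℝ) < η₀ * R₀ * (2 * K + 1) := by positivity
  have hBpos : (0:ℝ) < η₀ * (K + K ^ 2) * (2 * R₀ + 1) := by positivity
  have hder : ∀ s, HasDerivAt (fun u => (W u - Wk u, g (W u) - gT (Wk u)))
      ((-(η₀ • ∑ i, g (W s) i • J (W s) i) - -(η₀ • ∑ i, gT (Wk s) i • JT (Wk s) i),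
        evec (fun i => ⟪J (W s) i, -(η₀ • ∑ j, g (W s) j • J (W s) j)⟫)
          - evec (fun i => ⟪JT (Wk s) i, -(η₀ • ∑ j, gT (Wk s) j • JT (Wk s) j)⟫))) s :=
    fun s => ((hW' s).sub (hWk' s)).prodMk ((hgW s).sub (hgTWk s))
  have key : ∀ s ∈ Set.Icc (0:ℝ) t₀,
      ‖(W s - Wk s, g (W s) - gT (Wk s))‖ ≤
        gronwallBound 0 (η₀ * (K + K ^ 2) * (2 * R₀ + 1))
          ((η₀ * R₀ * (2 * K + 1)) * ε) (s - 0) := by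
    apply norm_le_gronwallBound_of_norm_deriv_right_le
      (f' := fun s =>
        (-(η₀ • ∑ i, g (W s) i • J (W s) i) - -(η₀ • ∑ i, gT (Wk s) i • JT (Wk s) i),
          evec (fun i => ⟪J (W s) i, -(η₀ • ∑ j, g (W s) j • J (W s) j)⟫)
            - evec (fun i => ⟪JT (Wk s) i, -(η₀ • ∑ j, gT (Wk s) j • JT (Wk s) j)⟫)))
    · exact fun s _ => (hder s).continuousAt.continuousWithinAt
    · exact fun s _ => (hder s).hasDerivWithinAt
    · show ‖(W 0 - Wk 0, g (W 0) - gT (Wk 0))‖ ≤ 0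
      rw [hg0, hW0, sub_self, sub_self]
      rw [Prod.norm_def]
      simp
    · intro s hs
      have hsIcc : s ∈ Set.Icc (0:ℝ) t₀ := ⟨hs.1, hs.2.le⟩
      have hg1 := hgR s hsIcc
      have hb1 := hJbW s hsIcc
      have hb2 := hJTb s hsIcc
      have hl1 := hlip s hsIcc
      have hd1 := hdiff s hsIcc
      have hPQ : ‖(∑ i, g (W s) i • J (W s) i) - ∑ i, gT (Wk s) i • JT (Wk s) i‖
          ≤ R₀ * ε + R₀ * (K * ‖W s - Wk s‖) + K * ‖g (W s) - gT (Wk s)‖ :=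
        sum_smul_sub_sum_smul_bound _ _ _ _ _ hR₀.le hg1 hd1 hl1 hb2
      have hPn : ‖∑ i, g (W s) i • J (W s) i‖ ≤ K * R₀ := by
        have h := aux_norm_sum_smul (fun i => g (W s) i) (fun i => J (W s) i)
        have h' : ‖∑ i, g (W s) i • J (W s) i‖
            ≤ ‖g (W s)‖ * Real.sqrt (∑ i, ‖J (W s) i‖ ^ 2) := by
          rw [euclid_norm (g (W s))]; exact h
        refine h'.trans ?_
        rw [mul_comm K R₀]
        exact mul_le_mul hg1 hb1 (Real.sqrt_nonneg _) hR₀.le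
      have hJJT : Real.sqrt (∑ i, ‖J (W s) i - JT (Wk s) i‖ ^ 2)
          ≤ ε + K * ‖W s - Wk s‖ := by
        have h := aux_minkowski (fun i => J (W s) i - JT (W s) i)
          (fun i => JT (W s) i - JT (Wk s) i)
        simp_rw [sub_add_sub_cancel] at h
        exact h.trans (add_le_add hd1 hl1)
      have hxF : ‖W s - Wk s‖ ≤ ‖(W s - Wk s, g (W s) - gT (Wk s))‖ :=
        norm_fst_le ((W s - Wk s, g (W s) - gT (Wk s)) : E × EuclideanSpace ℝ (Fin n))
      have hyF : ‖g (W s) - gT (Wk s)‖ ≤ ‖(W s - Wk s, g (W s) - gT (Wk s))‖ :=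
        norm_snd_le ((W s - Wk s, g (W s) - gT (Wk s)) : E × EuclideanSpace ℝ (Fin n))
      have hx' : ‖-(η₀ • ∑ i, g (W s) i • J (W s) i)
            - -(η₀ • ∑ i, gT (Wk s) i • JT (Wk s) i)‖
          ≤ η₀ * (R₀ * ε + R₀ * (K * ‖W s - Wk s‖) + K * ‖g (W s) - gT (Wk s)‖) := by
        have heq : -(η₀ • ∑ i, g (W s) i • J (W s) i)
              - -(η₀ • ∑ i, gT (Wk s) i • JT (Wk s) i)
            = -(η₀ • ((∑ i, g (W s) i • J (W s) i) - ∑ i, gT (Wk s) i • JT (Wk s) i)) := by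
          rw [smul_sub]; abel
        rw [heq, norm_neg, norm_smul, Real.norm_eq_abs, abs_of_pos hη₀]
        exact mul_le_mul_of_nonneg_left hPQ hη₀.le
      have hy' : ‖evec (fun i => ⟪J (W s) i, -(η₀ • ∑ j, g (W s) j • J (W s) j)⟫)
            - evec (fun i => ⟪JT (Wk s) i, -(η₀ • ∑ j, gT (Wk s) j • JT (Wk s) j)⟫)‖
          ≤ η₀ * ((ε + K * ‖W s - Wk s‖) * (K * R₀)
              + K * (R₀ * ε + R₀ * (K * ‖W s - Wk s‖) + K * ‖g (W s) - gT (Wk s)‖)) := by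
        rw [inner_vec_sub_eq, norm_smul, Real.norm_eq_abs, abs_neg, abs_of_pos hη₀]
        refine mul_le_mul_of_nonneg_left ?_ hη₀.le
        refine (norm_add_le _ _).trans (add_le_add ?_ ?_)
        · exact (aux_inner_vec_norm _ _).trans
            (mul_le_mul hJJT hPn (norm_nonneg _) (by positivity))
        · exact (aux_inner_vec_norm _ _).trans
            (mul_le_mul hb2 hPQ (norm_nonneg _) hK.le)
      rw [Prod.norm_def]
      refine max_le (hx'.trans ?_) (hy'.trans ?_)
      · nlinarith [mul_le_mul_of_nonneg_left hxF (by positivity : (0:ℝ) ≤ η₀ * R₀ * K),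
          mul_le_mul_of_nonneg_left hyF (by positivity : (0:ℝ) ≤ η₀ * K),
          mul_nonneg (by positivity : (0:ℝ) ≤ η₀ * (K * R₀ + K ^ 2 * (2 * R₀ + 1)))
            (norm_nonneg (W s - Wk s, g (W s) - gT (Wk s))),
          mul_nonneg (by positivity : (0:ℝ) ≤ η₀ * R₀ * (2 * K)) hε.le]
      · nlinarith [mul_le_mul_of_nonneg_left hxF (by positivity : (0:ℝ) ≤ 2 * η₀ * K ^ 2 * R₀),
          mul_le_mul_of_nonneg_left hyF (by positivity : (0:ℝ) ≤ η₀ * K ^ 2),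
          mul_nonneg (by positivity : (0:ℝ) ≤ η₀ * K * (2 * R₀ + 1))
            (norm_nonneg (W s - Wk s, g (W s) - gT (Wk s))),
          mul_nonneg (by positivity : (0:ℝ) ≤ η₀ * R₀) hε.le]
  intro t ht
  have hfT := key t ht
  rw [sub_zero, gronwallBound_of_K_ne_0 hBpos.ne'] at hfT
  simp only [zero_mul, zero_add] at hfT
  have h1 : ‖W t - Wk t‖ ≤ ‖(W t - Wk t, g (W t) - gT (Wk t))‖ :=
    norm_fst_le ((W t - Wk t, g (W t) - gT (Wk t)) : E × EuclideanSpace ℝ (Fin n))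
  have h2 : ‖g (W t) - gT (Wk t)‖ ≤ ‖(W t - Wk t, g (W t) - gT (Wk t))‖ :=
    norm_snd_le ((W t - Wk t, g (W t) - gT (Wk t)) : E × EuclideanSpace ℝ (Fin n))
  have hfrac : (0:ℝ) ≤ (η₀ * R₀ * (2 * K + 1)) * ε / (η₀ * (K + K ^ 2) * (2 * R₀ + 1)) := by
    positivity
  have heq : 2 * ((η₀ * R₀ * (2 * K + 1)) * ε / (η₀ * (K + K ^ 2) * (2 * R₀ + 1)) *
        (Real.exp ((η₀ * (K + K ^ 2) * (2 * R₀ + 1)) * t) - 1))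
      = (2 * (η₀ * R₀ * (2 * K + 1)) / (η₀ * (K + K ^ 2) * (2 * R₀ + 1))) * ε *
          Real.exp ((η₀ * (K + K ^ 2) * (2 * R₀ + 1)) * t)
        - 2 * ((η₀ * R₀ * (2 * K + 1)) * ε / (η₀ * (K + K ^ 2) * (2 * R₀ + 1))) := by
    field_simp
  linarith

end Core


section Specialize

lemma loss_eq (d m n : ℕ) (σ : ℝ → ℝ) (a : Fin m → ℝ)
    (X : Fin n → EuclideanSpace ℝ (Fin d)) (y : EuclideanSpace ℝ (Fin n)) :
    loss d m n σ a X y = fun V => (1/2 : ℝ) * ∑ i, (net d m σ a V (X i) - y i) ^ 2 := by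
  funext V
  unfold loss
  congr 1
  rw [euclid_norm (resid d m n σ a X y V), Real.sq_sqrt (by positivity)]
  rfl

lemma lossT_eq (d m n k : ℕ) (σ : ℝ → ℝ) (a : Fin m → ℝ) (W₀ : Wts d m)
    (X : Fin n → EuclideanSpace ℝ (Fin d)) (y : EuclideanSpace ℝ (Fin n)) :
    lossT d m n k σ a W₀ X y
      = fun V => (1/2 : ℝ) * ∑ i, (netT d m k σ a W₀ V (X i) - y i) ^ 2 := by
  funext V
  unfold lossT
  congr 1
  rw [euclid_norm (residT d m n k σ a W₀ X y V), Real.sq_sqrt (by positivity)]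
  rfl

lemma grad_loss (d m n : ℕ) {σ : ℝ → ℝ} (hσ : ContDiff ℝ 1 σ) (a : Fin m → ℝ)
    (X : Fin n → EuclideanSpace ℝ (Fin d)) (y : EuclideanSpace ℝ (Fin n)) (V : Wts d m) :
    gradient (loss d m n σ a X y) V
      = ∑ i, resid d m n σ a X y V i • Jrow d m n σ a X V i := by
  rw [loss_eq]
  exact (hasGradientAt_halfSq (fun i U => net d m σ a U (X i)) (fun i => y i) V
    (fun i => net_diff hσ a (X i) V)).gradient

lemma grad_lossT (d m n k : ℕ) (σ : ℝ → ℝ) (a : Fin m → ℝ) (W₀ : Wts d m)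
    (X : Fin n → EuclideanSpace ℝ (Fin d)) (y : EuclideanSpace ℝ (Fin n)) (V : Wts d m) :
    gradient (lossT d m n k σ a W₀ X y) V
      = ∑ i, residT d m n k σ a W₀ X y V i • JrowT d m n k σ a W₀ X V i := by
  rw [lossT_eq]
  exact (hasGradientAt_halfSq (fun i U => netT d m k σ a W₀ U (X i)) (fun i => y i) V
    (fun i => netT_diff σ a W₀ (X i) V)).gradient

end Specialize

set_option maxHeartbeats 4000000 in
set_option synthInstance.maxHeartbeats 400000 in
/-- Gronwall-type coupling bound (Steps 1–3 of the proof of the main theorem). -/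
theorem gronwall_coupling
    (η₀ K R₀ : ℝ) (hη₀ : 0 < η₀) (hK : 0 < K) (hR₀ : 0 < R₀) :
    ∃ a b : ℝ, 0 < a ∧ 0 < b ∧
      ∀ (d m n k : ℕ) (σ : ℝ → ℝ), ContDiff ℝ 1 σ →
      ∀ sgn : Fin m → ℝ, (∀ r, sgn r = 1 ∨ sgn r = -1) →
      ∀ (W₀ : Wts d m) (X : Fin n → EuclideanSpace ℝ (Fin d)),
        (∀ i, ‖X i‖ = 1) →
      ∀ y : EuclideanSpace ℝ (Fin n),
      ∀ C₀ c ε t₀ : ℝ, 0 < C₀ → 0 < c → 0 < ε → 0 < t₀ →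
      ∀ W Wk : ℝ → Wts d m,
        W 0 = W₀ → Wk 0 = W₀ →
        (∀ t : ℝ, HasDerivAt W (-(η₀ • gradient (loss d m n σ sgn X y) (W t))) t) →
        (∀ t : ℝ, HasDerivAt Wk (-(η₀ • gradient (lossT d m n k σ sgn W₀ X y) (Wk t))) t) →
        -- (i) both trajectories stay in the ball of radius C₀ around W₀
        (∀ t ∈ Set.Icc (0 : ℝ) t₀, ‖W t - W₀‖ ≤ C₀ ∧ ‖Wk t - W₀‖ ≤ C₀) →
        -- (ii) boundedness of both Jacobians on the ball ...
        (∀ V : Wts d m, ‖V - W₀‖ ≤ C₀ →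
          Real.sqrt (∑ i, ‖Jrow d m n σ sgn X V i‖ ^ 2) ≤ K ∧
          Real.sqrt (∑ i, ‖JrowT d m n k σ sgn W₀ X V i‖ ^ 2) ≤ K) →
        -- ... and K-Lipschitzness of both Jacobians on the ball
        (∀ V V' : Wts d m, ‖V - W₀‖ ≤ C₀ → ‖V' - W₀‖ ≤ C₀ →
          Real.sqrt (∑ i, ‖Jrow d m n σ sgn X V i - Jrow d m n σ sgn X V' i‖ ^ 2)
            ≤ K * ‖V - V'‖ ∧
          Real.sqrt (∑ i, ‖JrowT d m n k σ sgn W₀ X V i - JrowT d m n k σ sgn W₀ X V' i‖ ^ 2)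
            ≤ K * ‖V - V'‖) →
        -- (iii) exponential decay of both residuals
        (∀ t ∈ Set.Icc (0 : ℝ) t₀,
          ‖resid d m n σ sgn X y (W t)‖ ≤ R₀ * Real.exp (-(c * t)) ∧
          ‖residT d m n k σ sgn W₀ X y (Wk t)‖ ≤ R₀ * Real.exp (-(c * t))) →
        -- (iv) Jacobian difference bound along the full-training trajectory
        (∀ t ∈ Set.Icc (0 : ℝ) t₀,
          Real.sqrt (∑ i, ‖Jrow d m n σ sgn X (W t) i - JrowT d m n k σ sgn W₀ X (W t) i‖ ^ 2)
            ≤ ε) →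
      ∀ t ∈ Set.Icc (0 : ℝ) t₀,
        ‖W t - Wk t‖ + ‖resid d m n σ sgn X y (W t) - residT d m n k σ sgn W₀ X y (Wk t)‖
          ≤ a * ε * Real.exp (b * t) := by
  refine ⟨2 * (η₀ * R₀ * (2 * K + 1)) / (η₀ * (K + K ^ 2) * (2 * R₀ + 1)),
    η₀ * (K + K ^ 2) * (2 * R₀ + 1), by positivity, by positivity, ?_⟩
  intro d m n k σ hσ sgn _hsgn W₀ X _hX y C₀ c ε t₀ _hC₀ hc hε _ht₀ W Wk hW0 hWk0 hWd hWkd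
    hball hJb hJl hgd hJd
  have inst : ContinuousSMul ℝ (Wts d m) := by infer_instance
  have hW' : ∀ s, HasDerivAt W
      (-(η₀ • ∑ i, resid d m n σ sgn X y (W s) i • Jrow d m n σ sgn X (W s) i)) s := by
    intro s
    have h := hWd s
    rwa [grad_loss d m n hσ sgn X y (W s)] at h
  have hWk' : ∀ s, HasDerivAt Wk
      (-(η₀ • ∑ i, residT d m n k σ sgn W₀ X y (Wk s) i
        • JrowT d m n k σ sgn W₀ X (Wk s) i)) s := by
    intro s
    have h := hWkd s
    rwa [grad_lossT d m n k σ sgn W₀ X y (Wk s)] at h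
  have hgW : ∀ s, HasDerivAt (fun u => resid d m n σ sgn X y (W u))
      (evec fun i => ⟪Jrow d m n σ sgn X (W s) i,
        -(η₀ • ∑ j, resid d m n σ sgn X y (W s) j • Jrow d m n σ sgn X (W s) j)⟫) s := by
    intro s
    exact hasDerivAt_residual (fun i U => net d m σ sgn U (X i)) (fun i => y i) W _ s (hW' s)
      (fun i V => net_diff hσ sgn (X i) V)
  have hgTWk : ∀ s, HasDerivAt (fun u => residT d m n k σ sgn W₀ X y (Wk u))
      (evec fun i => ⟪JrowT d m n k σ sgn W₀ X (Wk s) i,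
        -(η₀ • ∑ j, residT d m n k σ sgn W₀ X y (Wk s) j
          • JrowT d m n k σ sgn W₀ X (Wk s) j)⟫) s := by
    intro s
    exact hasDerivAt_residual (fun i U => netT d m k σ sgn W₀ U (X i)) (fun i => y i) Wk _ s
      (hWk' s) (fun i V => netT_diff σ sgn W₀ (X i) V)
  refine abstract_gronwall η₀ K R₀ hη₀ hK hR₀ ε t₀ hε W Wk
    (resid d m n σ sgn X y) (residT d m n k σ sgn W₀ X y)
    (Jrow d m n σ sgn X) (JrowT d m n k σ sgn W₀ X)
    (by rw [hW0, hWk0]) ?_ hW' hWk' hgW hgTWk ?_ ?_ ?_ ?_ ?_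
  · rw [hW0, hWk0]
    ext i
    show net d m σ sgn W₀ (X i) - y i = netT d m k σ sgn W₀ W₀ (X i) - y i
    rw [netT_center]
  · intro s hs
    have he : Real.exp (-(c * s)) ≤ 1 := by
      rw [Real.exp_le_one_iff]
      nlinarith [hs.1]
    exact (hgd s hs).1.trans (by nlinarith)
  · exact fun s hs => (hJb (W s) (hball s hs).1).1
  · exact fun s hs => (hJb (Wk s) (hball s hs).2).2
  · exact fun s hs => (hJl (W s) (Wk s) (hball s hs).1 (hball s hs).2).2
  · exact fun s hs => hJd s hs
end
end

section
/- Boundedness of gradient flow for full training (deterministic form of Lemma A.1(b)): Assume |σ'(t)| ≤ C₁ for all t, σ' is C₁-Lipschitz, and ‖x_i‖ = 1 for all i; set K = C₁√n. Assume ⟨v, Θ̂(W₀) v⟩ ≥ λ‖v‖² for all v ∈ ℝⁿ for some λ > 0, ‖g(W₀)‖ ≤ R₀, and m ≥ (9 K³ R₀ / λ²)². Then any solution W_t of the full-training gradient flow satisfies, for all t ≥ 0: (a) ‖g_t‖ ≤ e^{−η₀ λ t / 3} R₀; (b) ‖W_t − W₀‖_F ≤ (3 K R₀ / λ)(1 −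 e^{−η₀ λ t / 3}); and (c) ⟨v, Θ̂(W_t) v⟩ ≥ (λ/3)‖v‖² for all v ∈ ℝⁿ. -/
open scoped BigOperators RealInnerProductSpace
noncomputable section

set_option synthInstance.maxHeartbeats 400000
set_option maxHeartbeats 1000000


namespace NTKAux

lemma hasGradientAt_inner_right {F : Type*} [NormedAddCommGroup F] [InnerProductSpace ℝ F]
    [CompleteSpace F] (u W : F) : HasGradientAt (fun V => ⟪V, u⟫) u W := by
  have h : (fun V : F => ⟪V, u⟫) = fun V => (InnerProductSpace.toDual ℝ F u) V := by
    funext V; simp [InnerProductSpace.toDual_apply_apply, real_inner_comm]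
  rw [HasGradientAt, HasGradientAtFilter, h]
  exact (InnerProductSpace.toDual ℝ F u).hasFDerivAt

lemma gradScomp {F : Type*} [NormedAddCommGroup F] [InnerProductSpace ℝ F]
    [CompleteSpace F] {f : F → ℝ} {g x : F} (hf : HasGradientAt f g x)
    {σ : ℝ → ℝ} {c : ℝ} (hσ : HasDerivAt σ c (f x)) :
    HasGradientAt (fun V => σ (f V)) (c • g) x := by
  have := hσ.comp_hasFDerivAt x hf.hasFDerivAt
  rw [HasGradientAt, HasGradientAtFilter, map_smul]
  exact this

lemma gradConstMul {F : Type*} [NormedAddCommGroup F] [InnerProductSpace ℝ F]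
    [CompleteSpace F] {f : F → ℝ} {g x : F} (c : ℝ) (hf : HasGradientAt f g x) :
    HasGradientAt (fun V => c * f V) (c • g) x := by
  have := hf.hasFDerivAt.const_mul c
  rw [HasGradientAt, HasGradientAtFilter, map_smul]
  exact this

lemma gradSum {F : Type*} [NormedAddCommGroup F] [InnerProductSpace ℝ F]
    [CompleteSpace F] {ι : Type*} (s : Finset ι) {f : ι → F → ℝ} {g : ι → F} {x : F}
    (hf : ∀ i ∈ s, HasGradientAt (f i) (g i) x) :
    HasGradientAt (fun V => ∑ i ∈ s, f i V) (∑ i ∈ s, g i) x := by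
  have := HasFDerivAt.fun_sum (fun i hi => (hf i hi).hasFDerivAt)
  rw [HasGradientAt, HasGradientAtFilter, map_sum]
  exact this


lemma sum_apply' {d m : ℕ} {ι : Type*} (s : Finset ι) (f : ι → Wts d m) (j : Fin m) :
    (∑ r ∈ s, f r) j = ∑ r ∈ s, f r j := by
  classical
  induction s using Finset.induction with
  | empty => rfl
  | insert _ _ h ih => rw [Finset.sum_insert h, Finset.sum_insert h, PiLp.add_apply, ih]

def blk (d m : ℕ) (r : Fin m) (x : EuclideanSpace ℝ (Fin d)) : Wts d m :=
  WithLp.toLp 2 (fun s => if s = r then x else 0)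

lemma inner_blk (d m : ℕ) (r : Fin m) (x : EuclideanSpace ℝ (Fin d)) (V : Wts d m) :
    ⟪V, blk d m r x⟫ = ⟪V r, x⟫ := by
  simp only [PiLp.inner_apply, blk]
  rw [Finset.sum_eq_single r] <;> simp +contextual

/-- explicit gradient of the network in the weights -/
def Phi (d m : ℕ) (σ : ℝ → ℝ) (a : Fin m → ℝ) (x : EuclideanSpace ℝ (Fin d))
    (W : Wts d m) : Wts d m :=
  WithLp.toLp 2 (fun r => ((Real.sqrt m)⁻¹ * (a r * deriv σ ⟪W r, x⟫)) • x)

lemma hasGradientAt_net (d m : ℕ) (σ : ℝ → ℝ) (hσ : ContDiff ℝ 1 σ) (a : Fin m → ℝ)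
    (x : EuclideanSpace ℝ (Fin d)) (W : Wts d m) :
    HasGradientAt (fun V => net d m σ a V x) (Phi d m σ a x W) W := by
  have hderiv : ∀ t : ℝ, HasDerivAt σ (deriv σ t) t := fun t =>
    ((hσ.differentiable (by norm_num)) t).hasDerivAt
  have h1 : ∀ r : Fin m, HasGradientAt (fun V : Wts d m => a r * σ ⟪V r, x⟫)
      ((a r * deriv σ ⟪W r, x⟫) • blk d m r x) W := by
    intro r
    have hi : HasGradientAt (fun V : Wts d m => ⟪V r, x⟫) (blk d m r x) W := by
      have := hasGradientAt_inner_right (blk d m r x) W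
      simpa only [inner_blk] using this
    have := gradConstMul (a r) (gradScomp hi (hderiv _))
    simpa [smul_smul] using this
  have hsum := gradSum Finset.univ (fun r _ => h1 r)
  have h2 := gradConstMul (Real.sqrt m)⁻¹ hsum
  have h3 : ((Real.sqrt m)⁻¹ •
      ∑ r : Fin m, (a r * deriv σ ⟪W r, x⟫) • blk d m r x) = Phi d m σ a x W := by
    refine PiLp.ext fun s => ?_
    have : ((Real.sqrt m)⁻¹ •
        ∑ r : Fin m, (a r * deriv σ ⟪W r, x⟫) • blk d m r x) s
        = (Real.sqrt m)⁻¹ • ∑ r : Fin m, (a r * deriv σ ⟪W r, x⟫) • (blk d m r x s) := by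
      rw [PiLp.smul_apply, sum_apply']
      simp only [PiLp.smul_apply]
    rw [this]
    simp only [blk, PiLp.toLp_apply]
    rw [Finset.sum_eq_single s]
    · simp [Phi, smul_smul]
    · intro b _ hb; simp [if_neg (Ne.symm hb)]
    · simp
  rw [← h3]
  exact h2


section
variable (d m n : ℕ) (σ : ℝ → ℝ) (a : Fin m → ℝ)
  (X : Fin n → EuclideanSpace ℝ (Fin d)) (y : EuclideanSpace ℝ (Fin n))

def SS (W : Wts d m) (v : EuclideanSpace ℝ (Fin n)) : Wts d m :=
  ∑ i, v i • Phi d m σ a (X i) W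

lemma Jrow_eq (hσ : ContDiff ℝ 1 σ) (W : Wts d m) (i : Fin n) :
    Jrow d m n σ a X W i = Phi d m σ a (X i) W :=
  (hasGradientAt_net d m σ hσ a (X i) W).gradient

lemma norm_sq_eucl {k : ℕ} (v : EuclideanSpace ℝ (Fin k)) : ‖v‖ ^ 2 = ∑ i, v i ^ 2 := by
  rw [PiLp.norm_sq_eq_of_L2]
  exact Finset.sum_congr rfl fun i _ => by rw [Real.norm_eq_abs, sq_abs]

lemma hasGradientAt_loss (hσ : ContDiff ℝ 1 σ) (W : Wts d m) :
    HasGradientAt (loss d m n σ a X y)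
      (SS d m n σ a X W (resid d m n σ a X y W)) W := by
  have hre : loss d m n σ a X y = fun V => ∑ i, (1/2) * (net d m σ a V (X i) - y i) ^ 2 := by
    funext V
    rw [loss, norm_sq_eucl, Finset.mul_sum]
    rfl
  rw [hre, SS]
  refine gradSum Finset.univ fun i _ => ?_
  have hd : HasDerivAt (fun s : ℝ => (1/2) * (s - y i) ^ 2)
      (net d m σ a W (X i) - y i) (net d m σ a W (X i)) := by
    have h1 := (((hasDerivAt_id (net d m σ a W (X i))).sub_const (y i)).pow 2).const_mul
      ((1:ℝ)/2)
    convert h1 using 1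
    · rfl
    · rfl
    · funext s; simp
    simp
  have := gradScomp (hasGradientAt_net d m σ hσ a (X i) W) hd
  simpa [resid] using this

lemma gradient_loss_eq (hσ : ContDiff ℝ 1 σ) (W : Wts d m) :
    gradient (loss d m n σ a X y) W = SS d m n σ a X W (resid d m n σ a X y W) :=
  (hasGradientAt_loss d m n σ a X y hσ W).gradient

lemma quad_eq_norm_SS (hσ : ContDiff ℝ 1 σ) (W : Wts d m) (v : EuclideanSpace ℝ (Fin n)) :
    ∑ i, ∑ j, v i * ⟪Jrow d m n σ a X W i, Jrow d m n σ a X W j⟫ * v j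
      = ‖SS d m n σ a X W v‖ ^ 2 := by
  rw [← real_inner_self_eq_norm_sq, SS, sum_inner]
  refine Finset.sum_congr rfl fun i _ => ?_
  rw [inner_sum]
  refine Finset.sum_congr rfl fun j _ => ?_
  rw [real_inner_smul_left, real_inner_smul_right, Jrow_eq d m n σ a X hσ,
    Jrow_eq d m n σ a X hσ]
  ring

end
section
lemma le_of_sq_le_sq {x b : ℝ} (hb : 0 ≤ b) (h : x ^ 2 ≤ b ^ 2) (hx : 0 ≤ x) : x ≤ b := by
  nlinarith

lemma sum_abs_le_sqrt {k : ℕ} (v : EuclideanSpace ℝ (Fin k)) :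
    ∑ i, |v i| ≤ Real.sqrt k * ‖v‖ := by
  classical
  set w : EuclideanSpace ℝ (Fin k) := WithLp.toLp 2 (fun i => |v i|) with hw
  set o : EuclideanSpace ℝ (Fin k) := WithLp.toLp 2 (fun _ => 1) with ho
  have h := real_inner_le_norm w o
  have h1 : ⟪w, o⟫ = ∑ i, |v i| := by
    rw [PiLp.inner_apply]
    refine Finset.sum_congr rfl fun i _ => ?_
    simp [hw, ho, RCLike.inner_apply]
  have h2 : ‖w‖ = ‖v‖ := by
    rw [EuclideanSpace.norm_eq, EuclideanSpace.norm_eq]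
    congr 1
    refine Finset.sum_congr rfl fun i _ => ?_
    simp [hw]
  have h3 : ‖o‖ = Real.sqrt k := by
    rw [EuclideanSpace.norm_eq]
    simp [ho]
  rw [h1, h2, h3] at h
  linarith [h, mul_comm ‖v‖ (Real.sqrt k)]

variable {d m n : ℕ} {σ : ℝ → ℝ} {a : Fin m → ℝ} {C₁ : ℝ}

lemma norm_Phi_le (hm : 1 ≤ m) (hbd : ∀ t : ℝ, |deriv σ t| ≤ C₁)
    (ha : ∀ r, a r = 1 ∨ a r = -1) {x : EuclideanSpace ℝ (Fin d)} (hx : ‖x‖ = 1)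
    (W : Wts d m) : ‖Phi d m σ a x W‖ ≤ C₁ := by
  have hC : 0 ≤ C₁ := le_trans (abs_nonneg _) (hbd 0)
  have hmpos : (0:ℝ) < m := by exact_mod_cast Nat.lt_of_lt_of_le Nat.zero_lt_one hm
  have hsq : ‖Phi d m σ a x W‖ ^ 2 ≤ C₁ ^ 2 := by
    rw [PiLp.norm_sq_eq_of_L2]
    have hbound : ∀ r : Fin m, ‖Phi d m σ a x W r‖ ^ 2 ≤ C₁ ^ 2 / m := by
      intro r
      rw [Phi, PiLp.toLp_apply, norm_smul, hx, mul_one]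
      have har : |a r| = 1 := by rcases ha r with h | h <;> simp [h]
      have : ‖(Real.sqrt m)⁻¹ * (a r * deriv σ ⟪W r, x⟫)‖ ≤ (Real.sqrt m)⁻¹ * C₁ := by
        rw [Real.norm_eq_abs, abs_mul, abs_mul, har, one_mul,
          abs_inv, abs_of_nonneg (Real.sqrt_nonneg _)]
        exact mul_le_mul_of_nonneg_left (hbd _) (inv_nonneg.2 (Real.sqrt_nonneg _))
      calc ‖(Real.sqrt m)⁻¹ * (a r * deriv σ ⟪W r, x⟫)‖ ^ 2
          ≤ ((Real.sqrt m)⁻¹ * C₁) ^ 2 :=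
            pow_le_pow_left₀ (norm_nonneg _) this 2
        _ = C₁ ^ 2 / m := by
            rw [mul_pow, ← Real.sqrt_inv, Real.sq_sqrt (inv_nonneg.2 hmpos.le)]
            field_simp
    calc ∑ r, ‖Phi d m σ a x W r‖ ^ 2 ≤ ∑ _r : Fin m, C₁ ^ 2 / m :=
          Finset.sum_le_sum fun r _ => hbound r
      _ = C₁ ^ 2 := by
          rw [Finset.sum_const, Finset.card_univ, Fintype.card_fin, nsmul_eq_mul]
          field_simp
  exact le_of_sq_le_sq hC hsq (norm_nonneg _)

lemma norm_Phi_sub_le (hC : 0 ≤ C₁) (hlip : ∀ s t : ℝ, |deriv σ s - deriv σ t| ≤ C₁ * |s - t|)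
    (ha : ∀ r, a r = 1 ∨ a r = -1) {x : EuclideanSpace ℝ (Fin d)} (hx : ‖x‖ = 1)
    (W₁ W₂ : Wts d m) :
    ‖Phi d m σ a x W₁ - Phi d m σ a x W₂‖ ≤ C₁ * (Real.sqrt m)⁻¹ * ‖W₁ - W₂‖ := by
  have hsq : ‖Phi d m σ a x W₁ - Phi d m σ a x W₂‖ ^ 2
      ≤ (C₁ * (Real.sqrt m)⁻¹ * ‖W₁ - W₂‖) ^ 2 := by
    rw [PiLp.norm_sq_eq_of_L2]
    have hterm : ∀ r : Fin m, ‖(Phi d m σ a x W₁ - Phi d m σ a x W₂) r‖ ^ 2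
        ≤ C₁ ^ 2 * ((Real.sqrt m)⁻¹) ^ 2 * ‖(W₁ - W₂) r‖ ^ 2 := by
      intro r
      have hsub : (Phi d m σ a x W₁ - Phi d m σ a x W₂) r
          = ((Real.sqrt m)⁻¹ * (a r * (deriv σ ⟪W₁ r, x⟫ - deriv σ ⟪W₂ r, x⟫))) • x := by
        rw [PiLp.sub_apply, Phi, Phi, PiLp.toLp_apply, PiLp.toLp_apply, ← sub_smul]
        congr 1
        ring
      rw [hsub, norm_smul, hx, mul_one, Real.norm_eq_abs]
      have har : |a r| = 1 := by rcases ha r with h | h <;> simp [h]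
      have h1 : |deriv σ ⟪W₁ r, x⟫ - deriv σ ⟪W₂ r, x⟫| ≤ C₁ * ‖(W₁ - W₂) r‖ := by
        refine le_trans (hlip _ _) ?_
        have h2 : ⟪W₁ r, x⟫ - ⟪W₂ r, x⟫ = ⟪(W₁ - W₂) r, x⟫ := by
          rw [PiLp.sub_apply, inner_sub_left]
        rw [h2]
        have := abs_real_inner_le_norm ((W₁ - W₂) r) x
        rw [hx, mul_one] at this
        exact mul_le_mul_of_nonneg_left this hC
      have habs : |(Real.sqrt m)⁻¹ * (a r * (deriv σ ⟪W₁ r, x⟫ - deriv σ ⟪W₂ r, x⟫))|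
          ≤ (Real.sqrt m)⁻¹ * (C₁ * ‖(W₁ - W₂) r‖) := by
        rw [abs_mul, abs_mul, har, one_mul, abs_inv, abs_of_nonneg (Real.sqrt_nonneg _)]
        exact mul_le_mul_of_nonneg_left h1 (inv_nonneg.2 (Real.sqrt_nonneg _))
      calc |(Real.sqrt m)⁻¹ * (a r * (deriv σ ⟪W₁ r, x⟫ - deriv σ ⟪W₂ r, x⟫))| ^ 2
          ≤ ((Real.sqrt m)⁻¹ * (C₁ * ‖(W₁ - W₂) r‖)) ^ 2 :=
            pow_le_pow_left₀ (abs_nonneg _) habs 2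
        _ = C₁ ^ 2 * ((Real.sqrt m)⁻¹) ^ 2 * ‖(W₁ - W₂) r‖ ^ 2 := by ring
    calc ∑ r, ‖(Phi d m σ a x W₁ - Phi d m σ a x W₂) r‖ ^ 2
        ≤ ∑ r, C₁ ^ 2 * ((Real.sqrt m)⁻¹) ^ 2 * ‖(W₁ - W₂) r‖ ^ 2 :=
          Finset.sum_le_sum fun r _ => hterm r
      _ = C₁ ^ 2 * ((Real.sqrt m)⁻¹) ^ 2 * ∑ r, ‖(W₁ - W₂) r‖ ^ 2 := by
          rw [← Finset.mul_sum]
      _ = (C₁ * (Real.sqrt m)⁻¹ * ‖W₁ - W₂‖) ^ 2 := by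
          rw [← PiLp.norm_sq_eq_of_L2]
          ring
  refine le_of_sq_le_sq ?_ hsq (norm_nonneg _)
  positivity


variable {d m n : ℕ} {σ : ℝ → ℝ} {a : Fin m → ℝ} {C₁ : ℝ}
  {X : Fin n → EuclideanSpace ℝ (Fin d)}

lemma norm_SS_le (hm : 1 ≤ m) (hbd : ∀ t : ℝ, |deriv σ t| ≤ C₁)
    (ha : ∀ r, a r = 1 ∨ a r = -1) (hX : ∀ i, ‖X i‖ = 1)
    (W : Wts d m) (v : EuclideanSpace ℝ (Fin n)) :
    ‖SS d m n σ a X W v‖ ≤ C₁ * Real.sqrt n * ‖v‖ := by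
  have hC : 0 ≤ C₁ := le_trans (abs_nonneg _) (hbd 0)
  calc ‖SS d m n σ a X W v‖ ≤ ∑ i, ‖v i • Phi d m σ a (X i) W‖ :=
        norm_sum_le _ _
    _ ≤ ∑ i, |v i| * C₁ := by
        refine Finset.sum_le_sum fun i _ => ?_
        rw [norm_smul, Real.norm_eq_abs]
        exact mul_le_mul_of_nonneg_left (norm_Phi_le hm hbd ha (hX i) W) (abs_nonneg _)
    _ = C₁ * ∑ i, |v i| := by rw [← Finset.sum_mul]; ring
    _ ≤ C₁ * (Real.sqrt n * ‖v‖) :=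
        mul_le_mul_of_nonneg_left (sum_abs_le_sqrt v) hC
    _ = C₁ * Real.sqrt n * ‖v‖ := by ring

lemma norm_SS_sub_le (hbd : ∀ t : ℝ, |deriv σ t| ≤ C₁)
    (hlip : ∀ s t : ℝ, |deriv σ s - deriv σ t| ≤ C₁ * |s - t|)
    (ha : ∀ r, a r = 1 ∨ a r = -1) (hX : ∀ i, ‖X i‖ = 1)
    (W₁ W₂ : Wts d m) (v : EuclideanSpace ℝ (Fin n)) :
    ‖SS d m n σ a X W₁ v - SS d m n σ a X W₂ v‖
      ≤ C₁ * Real.sqrt n * (Real.sqrt m)⁻¹ * ‖W₁ - W₂‖ * ‖v‖ := by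
  have hC : 0 ≤ C₁ := le_trans (abs_nonneg _) (hbd 0)
  have hsub : SS d m n σ a X W₁ v - SS d m n σ a X W₂ v
      = ∑ i, v i • (Phi d m σ a (X i) W₁ - Phi d m σ a (X i) W₂) := by
    rw [SS, SS, ← Finset.sum_sub_distrib]
    exact Finset.sum_congr rfl fun i _ => (smul_sub _ _ _).symm
  rw [hsub]
  calc ‖∑ i, v i • (Phi d m σ a (X i) W₁ - Phi d m σ a (X i) W₂)‖
      ≤ ∑ i, ‖v i • (Phi d m σ a (X i) W₁ - Phi d m σ a (X i) W₂)‖ := norm_sum_le _ _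
    _ ≤ ∑ i, |v i| * (C₁ * (Real.sqrt m)⁻¹ * ‖W₁ - W₂‖) := by
        refine Finset.sum_le_sum fun i _ => ?_
        rw [norm_smul, Real.norm_eq_abs]
        exact mul_le_mul_of_nonneg_left
          (norm_Phi_sub_le hC hlip ha (hX i) W₁ W₂) (abs_nonneg _)
    _ = (C₁ * (Real.sqrt m)⁻¹ * ‖W₁ - W₂‖) * ∑ i, |v i| := by
        rw [← Finset.sum_mul]; ring
    _ ≤ (C₁ * (Real.sqrt m)⁻¹ * ‖W₁ - W₂‖) * (Real.sqrt n * ‖v‖) := by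
        refine mul_le_mul_of_nonneg_left (sum_abs_le_sqrt v) ?_
        positivity
    _ = C₁ * Real.sqrt n * (Real.sqrt m)⁻¹ * ‖W₁ - W₂‖ * ‖v‖ := by ring

end
end NTKAux


set_option maxHeartbeats 2000000 in
/-- boundedness of gradient flow for full training (deterministic Lemma A.1(b)). -/
theorem full_training_gradient_flow_bounds
    (d m n : ℕ) (hm : 1 ≤ m) (hn : 1 ≤ n) (σ : ℝ → ℝ) (hσ : ContDiff ℝ 1 σ)
    (C₁ : ℝ) (hbd : ∀ t : ℝ, |deriv σ t| ≤ C₁)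
    (hlip : ∀ s t : ℝ, |deriv σ s - deriv σ t| ≤ C₁ * |s - t|)
    (a : Fin m → ℝ) (ha : ∀ r, a r = 1 ∨ a r = -1)
    (X : Fin n → EuclideanSpace ℝ (Fin d)) (hX : ∀ i, ‖X i‖ = 1)
    (y : EuclideanSpace ℝ (Fin n)) (W₀ : Wts d m)
    (lam R₀ η₀ : ℝ) (hlam : 0 < lam) (hη₀ : 0 < η₀)
    (hNTK : ∀ v : EuclideanSpace ℝ (Fin n),
      lam * ‖v‖ ^ 2 ≤
        ∑ i, ∑ j, v i * ⟪Jrow d m n σ a X W₀ i, Jrow d m n σ a X W₀ j⟫ * v j)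
    (hg0 : ‖resid d m n σ a X y W₀‖ ≤ R₀)
    (hm' : (9 * (C₁ * Real.sqrt n) ^ 3 * R₀ / lam ^ 2) ^ 2 ≤ (m : ℝ))
    (W : ℝ → Wts d m) (hW0 : W 0 = W₀)
    (hflow : ∀ t : ℝ, HasDerivAt W (-(η₀ • gradient (loss d m n σ a X y) (W t))) t) :
    ∀ t : ℝ, 0 ≤ t →
      ‖resid d m n σ a X y (W t)‖ ≤ Real.exp (-(η₀ * lam * t) / 3) * R₀ ∧
      ‖W t - W₀‖ ≤ 3 * (C₁ * Real.sqrt n) * R₀ / lam * (1 - Real.exp (-(η₀ * lam * t) / 3)) ∧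
      ∀ v : EuclideanSpace ℝ (Fin n),
        lam / 3 * ‖v‖ ^ 2 ≤
          ∑ i, ∑ j, v i * ⟪Jrow d m n σ a X (W t) i, Jrow d m n σ a X (W t) j⟫ * v j := by
  classical
  -- basic positivity facts
  have hC₁0 : 0 ≤ C₁ := le_trans (abs_nonneg _) (hbd 0)
  have hR₀0 : 0 ≤ R₀ := le_trans (norm_nonneg _) hg0
  have hK0 : 0 ≤ C₁ * Real.sqrt n := mul_nonneg hC₁0 (Real.sqrt_nonneg _)
  have hB0 : (0:ℝ) ≤ 3 * (C₁ * Real.sqrt n) * R₀ / lam := by positivity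
  have hmpos : (0:ℝ) < m := by exact_mod_cast Nat.lt_of_lt_of_le Nat.zero_lt_one hm
  -- explicit flow derivative
  have hflow' : ∀ t : ℝ, HasDerivAt W
      (-(η₀ • NTKAux.SS d m n σ a X (W t) (resid d m n σ a X y (W t)))) t := by
    intro t
    have h := hflow t
    rwa [NTKAux.gradient_loss_eq d m n σ a X y hσ] at h
  have hWcont : Continuous W :=
    continuous_iff_continuousAt.2 fun t => (hflow' t).continuousAt
  -- NTK assumption in SS form
  have hNTK' : ∀ v : EuclideanSpace ℝ (Fin n),
      lam * ‖v‖ ^ 2 ≤ ‖NTKAux.SS d m n σ a X W₀ v‖ ^ 2 := by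
    intro v
    rw [← NTKAux.quad_eq_norm_SS d m n σ a X hσ]
    exact hNTK v
  -- NTK lower bound within the ball
  have hlow : ∀ W' : Wts d m, ‖W' - W₀‖ ≤ 3 * (C₁ * Real.sqrt n) * R₀ / lam →
      ∀ v : EuclideanSpace ℝ (Fin n),
        lam / 3 * ‖v‖ ^ 2 ≤ ‖NTKAux.SS d m n σ a X W' v‖ ^ 2 := by
    intro W' hW' v
    have hK2 : lam ≤ (C₁ * Real.sqrt n) ^ 2 := by
      have hn1 : ‖(EuclideanSpace.single (⟨0, hn⟩ : Fin n) (1:ℝ))‖ = 1 := by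
        rw [EuclideanSpace.norm_single]; norm_num
      have h1 := hNTK' (EuclideanSpace.single (⟨0, hn⟩ : Fin n) (1:ℝ))
      have h2 := NTKAux.norm_SS_le hm hbd ha hX W₀
        (EuclideanSpace.single (⟨0, hn⟩ : Fin n) (1:ℝ))
      rw [hn1] at h1 h2
      nlinarith [norm_nonneg (NTKAux.SS d m n σ a X W₀
        (EuclideanSpace.single (⟨0, hn⟩ : Fin n) (1:ℝ)))]
    have hsl : Real.sqrt lam ≤ C₁ * Real.sqrt n := by
      rw [← Real.sqrt_sq hK0]; exact Real.sqrt_le_sqrt hK2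
    have hslpos : 0 < Real.sqrt lam := Real.sqrt_pos.2 hlam
    have hsm : 9 * (C₁ * Real.sqrt n) ^ 3 * R₀ / lam ^ 2 ≤ Real.sqrt m := by
      rw [← Real.sqrt_sq (by positivity : (0:ℝ) ≤ 9 * (C₁ * Real.sqrt n) ^ 3 * R₀ / lam ^ 2)]
      exact Real.sqrt_le_sqrt hm'
    have hsmpos : 0 < Real.sqrt m := Real.sqrt_pos.2 hmpos
    have hnum : (C₁ * Real.sqrt n) * (Real.sqrt m)⁻¹ * ‖W' - W₀‖ ≤ Real.sqrt lam / 3 := by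
      have h9 : 9 * (C₁ * Real.sqrt n) ^ 3 * R₀ ≤ Real.sqrt m * lam ^ 2 := by
        rw [div_le_iff₀ (by positivity : (0:ℝ) < lam ^ 2)] at hsm
        linarith
      have hlamsq : Real.sqrt lam ^ 2 = lam := Real.sq_sqrt hlam.le
      have target' : (C₁ * Real.sqrt n) * ‖W' - W₀‖ / Real.sqrt m ≤ Real.sqrt lam / 3 := by
        rw [div_le_div_iff₀ hsmpos (by norm_num : (0:ℝ) < 3)]
        have h2 : (C₁ * Real.sqrt n) * ‖W' - W₀‖ * 3 * lam ≤ 9 * (C₁ * Real.sqrt n) ^ 2 * R₀ := by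
          have hφlam : ‖W' - W₀‖ * lam ≤ 3 * (C₁ * Real.sqrt n) * R₀ :=
            (le_div_iff₀ hlam).1 hW'
          nlinarith [hK0, mul_le_mul_of_nonneg_left hφlam hK0]
        have h3 : 9 * (C₁ * Real.sqrt n) ^ 2 * R₀ ≤ Real.sqrt lam * Real.sqrt m * lam := by
          have hstep : Real.sqrt lam * (9 * (C₁ * Real.sqrt n) ^ 2 * R₀)
              ≤ (C₁ * Real.sqrt n) * (9 * (C₁ * Real.sqrt n) ^ 2 * R₀) :=
            mul_le_mul_of_nonneg_right hsl (by positivity)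
          have hid : Real.sqrt lam * (Real.sqrt lam * Real.sqrt m * lam)
              = Real.sqrt m * lam ^ 2 := by
            calc Real.sqrt lam * (Real.sqrt lam * Real.sqrt m * lam)
                = Real.sqrt lam ^ 2 * Real.sqrt m * lam := by ring
              _ = Real.sqrt m * lam ^ 2 := by rw [hlamsq]; ring
          refine le_of_mul_le_mul_left ?_ hslpos
          linarith [hstep, h9, hid]
        nlinarith [h2, h3, hlam]
      calc (C₁ * Real.sqrt n) * (Real.sqrt m)⁻¹ * ‖W' - W₀‖
          = (C₁ * Real.sqrt n) * ‖W' - W₀‖ / Real.sqrt m := by ring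
        _ ≤ Real.sqrt lam / 3 := target'
    have hpert := NTKAux.norm_SS_sub_le hbd hlip ha hX W' W₀ v
    have hlow0 : Real.sqrt lam * ‖v‖ ≤ ‖NTKAux.SS d m n σ a X W₀ v‖ := by
      refine NTKAux.le_of_sq_le_sq (norm_nonneg _) ?_ (by positivity)
      rw [mul_pow, Real.sq_sqrt hlam.le]
      exact hNTK' v
    have htri : ‖NTKAux.SS d m n σ a X W₀ v‖
        - ‖NTKAux.SS d m n σ a X W' v - NTKAux.SS d m n σ a X W₀ v‖
        ≤ ‖NTKAux.SS d m n σ a X W' v‖ := by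
      have h := norm_sub_norm_le (NTKAux.SS d m n σ a X W₀ v) (NTKAux.SS d m n σ a X W' v)
      rw [norm_sub_rev] at h
      linarith
    have hA : ‖NTKAux.SS d m n σ a X W' v - NTKAux.SS d m n σ a X W₀ v‖
        ≤ Real.sqrt lam / 3 * ‖v‖ := by
      refine le_trans hpert ?_
      have := mul_le_mul_of_nonneg_right hnum (norm_nonneg v)
      linarith
    have hfinal : 2 / 3 * Real.sqrt lam * ‖v‖ ≤ ‖NTKAux.SS d m n σ a X W' v‖ := by
      have h1 := mul_le_mul_of_nonneg_right hsl (norm_nonneg v)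
      linarith
    have h2 : (2 / 3 * Real.sqrt lam * ‖v‖) ^ 2 ≤ ‖NTKAux.SS d m n σ a X W' v‖ ^ 2 :=
      pow_le_pow_left₀ (by positivity) hfinal 2
    have h3 : lam / 3 * ‖v‖ ^ 2 ≤ (2 / 3 * Real.sqrt lam * ‖v‖) ^ 2 := by
      have hls : Real.sqrt lam ^ 2 = lam := Real.sq_sqrt hlam.le
      have hexp2 : (2 / 3 * Real.sqrt lam * ‖v‖) ^ 2 = 4 / 9 * lam * ‖v‖ ^ 2 := by
        calc (2 / 3 * Real.sqrt lam * ‖v‖) ^ 2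
            = 4 / 9 * Real.sqrt lam ^ 2 * ‖v‖ ^ 2 := by ring
          _ = 4 / 9 * lam * ‖v‖ ^ 2 := by rw [hls]
      rw [hexp2]
      nlinarith [sq_nonneg ‖v‖, hlam]
    linarith
  -- derivative of each residual coordinate
  have hgi' : ∀ (i : Fin n) (t : ℝ), HasDerivAt (fun u => resid d m n σ a X y (W u) i)
      ⟪NTKAux.Phi d m σ a (X i) (W t),
        -(η₀ • NTKAux.SS d m n σ a X (W t) (resid d m n σ a X y (W t)))⟫ t := by
    intro i t
    have hF := (NTKAux.hasGradientAt_net d m σ hσ a (X i) (W t)).hasFDerivAt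
    have h1 := hF.comp_hasDerivAt t (hflow' t)
    have h2 := h1.sub_const (y i)
    simpa [InnerProductSpace.toDual_apply_apply, resid] using h2
  -- derivative of the squared residual norm
  have hq' : ∀ t : ℝ, HasDerivAt (fun u => ‖resid d m n σ a X y (W u)‖ ^ 2)
      (-(2 * η₀ * ‖NTKAux.SS d m n σ a X (W t) (resid d m n σ a X y (W t))‖ ^ 2)) t := by
    intro t
    have hsum : HasDerivAt (fun u => ∑ i, (resid d m n σ a X y (W u) i) ^ 2)
        (∑ i, (2:ℝ) * (resid d m n σ a X y (W t) i) ^ 1 *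
          ⟪NTKAux.Phi d m σ a (X i) (W t),
            -(η₀ • NTKAux.SS d m n σ a X (W t) (resid d m n σ a X y (W t)))⟫) t := by
      refine HasDerivAt.fun_sum fun i _ => ?_
      have := (hgi' i t).pow 2
      norm_num at this ⊢
      exact this
    have hfun : (fun u => ∑ i, (resid d m n σ a X y (W u) i) ^ 2)
        = fun u => ‖resid d m n σ a X y (W u)‖ ^ 2 :=
      funext fun u => (NTKAux.norm_sq_eucl _).symm
    have hval : (∑ i, (2:ℝ) * (resid d m n σ a X y (W t) i) ^ 1 *
          ⟪NTKAux.Phi d m σ a (X i) (W t),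
            -(η₀ • NTKAux.SS d m n σ a X (W t) (resid d m n σ a X y (W t)))⟫)
        = -(2 * η₀ * ‖NTKAux.SS d m n σ a X (W t) (resid d m n σ a X y (W t))‖ ^ 2) := by
      have hS : ⟪NTKAux.SS d m n σ a X (W t) (resid d m n σ a X y (W t)),
          -(η₀ • NTKAux.SS d m n σ a X (W t) (resid d m n σ a X y (W t)))⟫
          = -(η₀ * ‖NTKAux.SS d m n σ a X (W t) (resid d m n σ a X y (W t))‖ ^ 2) := by
        rw [inner_neg_right, real_inner_smul_right, real_inner_self_eq_norm_sq]
      have hexp : ⟪NTKAux.SS d m n σ a X (W t) (resid d m n σ a X y (W t)),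
          -(η₀ • NTKAux.SS d m n σ a X (W t) (resid d m n σ a X y (W t)))⟫
          = ∑ i, (resid d m n σ a X y (W t) i) *
            ⟪NTKAux.Phi d m σ a (X i) (W t),
              -(η₀ • NTKAux.SS d m n σ a X (W t) (resid d m n σ a X y (W t)))⟫ := by
        conv_lhs => rw [NTKAux.SS]
        rw [sum_inner]
        exact Finset.sum_congr rfl fun i _ => real_inner_smul_left _ _ _
      calc (∑ i, (2:ℝ) * (resid d m n σ a X y (W t) i) ^ 1 *
            ⟪NTKAux.Phi d m σ a (X i) (W t),
              -(η₀ • NTKAux.SS d m n σ a X (W t) (resid d m n σ a X y (W t)))⟫)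
          = 2 * ∑ i, (resid d m n σ a X y (W t) i) *
            ⟪NTKAux.Phi d m σ a (X i) (W t),
              -(η₀ • NTKAux.SS d m n σ a X (W t) (resid d m n σ a X y (W t)))⟫ := by
            rw [Finset.mul_sum]
            exact Finset.sum_congr rfl fun i _ => by ring
        _ = -(2 * η₀ * ‖NTKAux.SS d m n σ a X (W t) (resid d m n σ a X y (W t))‖ ^ 2) := by
            rw [← hexp, hS]; ring
    rw [← hfun, ← hval]
    exact hsum
  -- Step A : exponential decay of the residual given control of the weights
  have stepA : ∀ T : ℝ, 0 ≤ T →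
      (∀ s ∈ Set.Icc (0:ℝ) T, ‖W s - W₀‖ ≤ 3 * (C₁ * Real.sqrt n) * R₀ / lam) →
      ∀ s ∈ Set.Icc (0:ℝ) T,
        ‖resid d m n σ a X y (W s)‖ ≤ Real.exp (-(η₀ * lam / 3 * s)) * R₀ := by
    intro T hT hWB
    have hh' : ∀ s : ℝ, HasDerivAt
        (fun u => Real.exp (2 * (η₀ * lam / 3) * u) * ‖resid d m n σ a X y (W u)‖ ^ 2)
        (2 * (η₀ * lam / 3) * Real.exp (2 * (η₀ * lam / 3) * s) * ‖resid d m n σ a X y (W s)‖ ^ 2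
          + Real.exp (2 * (η₀ * lam / 3) * s) *
            (-(2 * η₀ * ‖NTKAux.SS d m n σ a X (W s) (resid d m n σ a X y (W s))‖ ^ 2))) s := by
      intro s
      have he : HasDerivAt (fun u : ℝ => Real.exp (2 * (η₀ * lam / 3) * u))
          (2 * (η₀ * lam / 3) * Real.exp (2 * (η₀ * lam / 3) * s)) s := by
        have h0 := ((hasDerivAt_id s).const_mul (2 * (η₀ * lam / 3))).exp
        simpa [mul_comm] using h0
      exact he.mul (hq' s)
    have hanti : AntitoneOn
        (fun u => Real.exp (2 * (η₀ * lam / 3) * u) * ‖resid d m n σ a X y (W u)‖ ^ 2)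
        (Set.Icc 0 T) := by
      refine antitoneOn_of_deriv_nonpos (convex_Icc 0 T) ?_ ?_ ?_
      · exact fun s _ => ((hh' s).differentiableAt).continuousAt.continuousWithinAt
      · exact fun s _ => ((hh' s).differentiableAt).differentiableWithinAt
      · intro s hs
        rw [interior_Icc] at hs
        rw [(hh' s).deriv]
        have hlow' := hlow (W s) (hWB s (Set.Ioo_subset_Icc_self hs))
          (resid d m n σ a X y (W s))
        have hhint := mul_le_mul_of_nonneg_left hlow'
          (mul_nonneg (mul_nonneg (by norm_num : (0:ℝ) ≤ 2) hη₀.le)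
            (Real.exp_pos (2 * (η₀ * lam / 3) * s)).le)
        nlinarith [hhint]
    intro s hs
    have h0mem : (0:ℝ) ∈ Set.Icc (0:ℝ) T := ⟨le_rfl, hT⟩
    have hmono := hanti h0mem hs hs.1
    have hq0 : ‖resid d m n σ a X y (W 0)‖ ^ 2 ≤ R₀ ^ 2 := by
      rw [hW0]
      exact pow_le_pow_left₀ (norm_nonneg _) hg0 2
    have hstart : Real.exp (2 * (η₀ * lam / 3) * 0) * ‖resid d m n σ a X y (W 0)‖ ^ 2
        ≤ R₀ ^ 2 := by
      simpa using hq0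
    have hend : Real.exp (2 * (η₀ * lam / 3) * s) * ‖resid d m n σ a X y (W s)‖ ^ 2
        ≤ R₀ ^ 2 := le_trans hmono hstart
    have hsq : Real.exp (-(η₀ * lam / 3 * s)) * Real.exp (-(η₀ * lam / 3 * s)) *
        Real.exp (2 * (η₀ * lam / 3) * s) = 1 := by
      rw [← Real.exp_add, ← Real.exp_add, ← Real.exp_zero]
      congr 1
      ring
    have h2 : ‖resid d m n σ a X y (W s)‖ ^ 2 ≤ (Real.exp (-(η₀ * lam / 3 * s)) * R₀) ^ 2 := by
      nlinarith [hend, hsq, Real.exp_pos (2 * (η₀ * lam / 3) * s),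
        Real.exp_pos (-(η₀ * lam / 3 * s)), sq_nonneg (Real.exp (-(η₀ * lam / 3 * s))),
        sq_nonneg R₀]
    exact NTKAux.le_of_sq_le_sq (by positivity) h2 (norm_nonneg _)
  -- Step B : control of the weight displacement given residual decay
  have stepB : ∀ T : ℝ, 0 ≤ T →
      (∀ s ∈ Set.Icc (0:ℝ) T,
        ‖resid d m n σ a X y (W s)‖ ≤ Real.exp (-(η₀ * lam / 3 * s)) * R₀) →
      ∀ s ∈ Set.Icc (0:ℝ) T, ‖W s - W₀‖
        ≤ 3 * (C₁ * Real.sqrt n) * R₀ / lam * (1 - Real.exp (-(η₀ * lam / 3 * s))) := by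
    intro T hT hdec
    have hB' : ∀ u : ℝ, HasDerivAt
        (fun u => 3 * (C₁ * Real.sqrt n) * R₀ / lam * (1 - Real.exp (-(η₀ * lam / 3 * u))))
        (3 * (C₁ * Real.sqrt n) * R₀ / lam * (η₀ * lam / 3 * Real.exp (-(η₀ * lam / 3 * u)))) u := by
      intro u
      have h1 : HasDerivAt (fun u : ℝ => -(η₀ * lam / 3 * u)) (-(η₀ * lam / 3)) u := by
        simpa [Pi.neg_def] using ((hasDerivAt_id u).const_mul (η₀ * lam / 3)).neg
      have h2 := h1.exp
      have h3 := (h2.const_sub 1).const_mul (3 * (C₁ * Real.sqrt n) * R₀ / lam)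
      convert h3 using 1
      · rfl
      · rfl
      ring
    have bound : ∀ s ∈ Set.Ico (0:ℝ) T,
        ‖-(η₀ • NTKAux.SS d m n σ a X (W s) (resid d m n σ a X y (W s)))‖
        ≤ 3 * (C₁ * Real.sqrt n) * R₀ / lam * (η₀ * lam / 3 * Real.exp (-(η₀ * lam / 3 * s))) := by
      intro s hs
      have h1 : ‖-(η₀ • NTKAux.SS d m n σ a X (W s) (resid d m n σ a X y (W s)))‖
          = η₀ * ‖NTKAux.SS d m n σ a X (W s) (resid d m n σ a X y (W s))‖ := by
        rw [norm_neg, norm_smul, Real.norm_eq_abs, abs_of_pos hη₀]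
      have h2 := NTKAux.norm_SS_le hm hbd ha hX (W s) (resid d m n σ a X y (W s))
      have h3 := hdec s (Set.Ico_subset_Icc_self hs)
      have hBc : 3 * (C₁ * Real.sqrt n) * R₀ / lam * (η₀ * lam / 3)
          = η₀ * (C₁ * Real.sqrt n) * R₀ := by
        field_simp
      rw [h1]
      have h4 : η₀ * ‖NTKAux.SS d m n σ a X (W s) (resid d m n σ a X y (W s))‖
          ≤ η₀ * (C₁ * Real.sqrt n * ‖resid d m n σ a X y (W s)‖) :=
        mul_le_mul_of_nonneg_left h2 hη₀.le
      have h5 : η₀ * (C₁ * Real.sqrt n * ‖resid d m n σ a X y (W s)‖)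
          ≤ η₀ * (C₁ * Real.sqrt n * (Real.exp (-(η₀ * lam / 3 * s)) * R₀)) := by
        refine mul_le_mul_of_nonneg_left ?_ hη₀.le
        exact mul_le_mul_of_nonneg_left h3 hK0
      have h6 : 3 * (C₁ * Real.sqrt n) * R₀ / lam *
          (η₀ * lam / 3 * Real.exp (-(η₀ * lam / 3 * s)))
          = η₀ * (C₁ * Real.sqrt n) * R₀ * Real.exp (-(η₀ * lam / 3 * s)) := by
        rw [show 3 * (C₁ * Real.sqrt n) * R₀ / lam *
            (η₀ * lam / 3 * Real.exp (-(η₀ * lam / 3 * s)))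
            = (3 * (C₁ * Real.sqrt n) * R₀ / lam * (η₀ * lam / 3)) *
              Real.exp (-(η₀ * lam / 3 * s)) by ring, hBc]
      rw [h6]
      calc η₀ * ‖NTKAux.SS d m n σ a X (W s) (resid d m n σ a X y (W s))‖
          ≤ η₀ * (C₁ * Real.sqrt n * (Real.exp (-(η₀ * lam / 3 * s)) * R₀)) :=
            le_trans h4 h5
        _ = η₀ * (C₁ * Real.sqrt n) * R₀ * Real.exp (-(η₀ * lam / 3 * s)) := by ring
    have happ := image_norm_le_of_norm_deriv_right_le_deriv_boundary
      (f := fun u => W u - W₀)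
      (f' := fun u => -(η₀ • NTKAux.SS d m n σ a X (W u) (resid d m n σ a X y (W u))))
      (a := 0) (b := T)
      ((hWcont.sub continuous_const).continuousOn)
      (fun u _ => ((hflow' u).sub_const W₀).hasDerivWithinAt)
      (by simp [hW0])
      hB' bound
    intro s hs
    exact happ hs
  -- Main bootstrap claim : the weights stay in the ball for all nonnegative times
  have key : ∀ t : ℝ, 0 ≤ t → ‖W t - W₀‖ ≤ 3 * (C₁ * Real.sqrt n) * R₀ / lam := by
    rcases eq_or_lt_of_le hR₀0 with hR0 | hRpos
    · -- degenerate case R₀ = 0 : the flow is stationary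
      have hqanti : AntitoneOn (fun u => ‖resid d m n σ a X y (W u)‖ ^ 2) (Set.Ici 0) := by
        refine antitoneOn_of_deriv_nonpos (convex_Ici 0) ?_ ?_ ?_
        · exact fun s _ => ((hq' s).differentiableAt).continuousAt.continuousWithinAt
        · exact fun s _ => ((hq' s).differentiableAt).differentiableWithinAt
        · intro s _
          rw [(hq' s).deriv]
          have := sq_nonneg ‖NTKAux.SS d m n σ a X (W s) (resid d m n σ a X y (W s))‖
          nlinarith [hη₀]
      have hgzero : ∀ s : ℝ, 0 ≤ s → resid d m n σ a X y (W s) = 0 := by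
        intro s hs
        have h1 : ‖resid d m n σ a X y (W s)‖ ^ 2 ≤ ‖resid d m n σ a X y (W 0)‖ ^ 2 :=
          hqanti Set.self_mem_Ici hs hs
        have h2 : ‖resid d m n σ a X y (W 0)‖ ≤ 0 := by rw [hW0, hR0]; exact hg0
        have h3 : ‖resid d m n σ a X y (W s)‖ ^ 2 ≤ 0 := by
          have := norm_nonneg (resid d m n σ a X y (W 0))
          nlinarith
        have h4 : ‖resid d m n σ a X y (W s)‖ = 0 := by
          nlinarith [norm_nonneg (resid d m n σ a X y (W s))]
        exact norm_eq_zero.1 h4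
      intro t ht
      have hWd0 : ∀ s ∈ Set.Ico (0:ℝ) t,
          ‖-(η₀ • NTKAux.SS d m n σ a X (W s) (resid d m n σ a X y (W s)))‖ ≤ 0 := by
        intro s hs
        rw [hgzero s hs.1]
        have hSS0 : NTKAux.SS d m n σ a X (W s) (0 : EuclideanSpace ℝ (Fin n)) = 0 := by
          rw [NTKAux.SS]
          refine Finset.sum_eq_zero fun i _ => ?_
          simp
        rw [hSS0]
        simp
      have hconst := norm_image_sub_le_of_norm_deriv_right_le_segment
        (f := W)
        (f' := fun u => -(η₀ • NTKAux.SS d m n σ a X (W u) (resid d m n σ a X y (W u))))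
        (a := 0) (b := t)
        hWcont.continuousOn
        (fun u _ => (hflow' u).hasDerivWithinAt)
        hWd0 t ⟨ht, le_rfl⟩
      rw [hW0] at hconst
      have : ‖W t - W₀‖ ≤ 0 := by simpa using hconst
      linarith
    · -- main case R₀ > 0
      have hK2 : lam ≤ (C₁ * Real.sqrt n) ^ 2 := by
        have hn1 : ‖(EuclideanSpace.single (⟨0, hn⟩ : Fin n) (1:ℝ))‖ = 1 := by
          rw [EuclideanSpace.norm_single]; norm_num
        have h1 := hNTK' (EuclideanSpace.single (⟨0, hn⟩ : Fin n) (1:ℝ))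
        have h2 := NTKAux.norm_SS_le hm hbd ha hX W₀
          (EuclideanSpace.single (⟨0, hn⟩ : Fin n) (1:ℝ))
        rw [hn1] at h1 h2
        nlinarith [norm_nonneg (NTKAux.SS d m n σ a X W₀
          (EuclideanSpace.single (⟨0, hn⟩ : Fin n) (1:ℝ)))]
      have hKpos : 0 < C₁ * Real.sqrt n := by
        rcases lt_or_eq_of_le hK0 with h | h
        · exact h
        · exfalso; nlinarith [hlam, hK2]
      have hBpos : 0 < 3 * (C₁ * Real.sqrt n) * R₀ / lam := by positivity
      by_contra hcon
      push_neg at hcon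
      obtain ⟨t₀, ht₀, hviol⟩ := hcon
      have hφcont : Continuous fun u => ‖W u - W₀‖ := (hWcont.sub continuous_const).norm
      have hne : {u : ℝ | 0 ≤ u ∧ 3 * (C₁ * Real.sqrt n) * R₀ / lam < ‖W u - W₀‖}.Nonempty :=
        ⟨t₀, ht₀, hviol⟩
      have hbdd : BddBelow {u : ℝ | 0 ≤ u ∧ 3 * (C₁ * Real.sqrt n) * R₀ / lam < ‖W u - W₀‖} :=
        ⟨0, fun x hx => hx.1⟩
      set T := sInf {u : ℝ | 0 ≤ u ∧ 3 * (C₁ * Real.sqrt n) * R₀ / lam < ‖W u - W₀‖} with hTdef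
      have hT0 : 0 ≤ T := le_csInf hne fun x hx => hx.1
      have hbelow : ∀ s : ℝ, 0 ≤ s → s < T → ‖W s - W₀‖ ≤ 3 * (C₁ * Real.sqrt n) * R₀ / lam := by
        intro s hs hsT
        by_contra hgt
        push_neg at hgt
        exact absurd (csInf_le hbdd ⟨hs, hgt⟩) (not_le.2 hsT)
      have hφT : ‖W T - W₀‖ ≤ 3 * (C₁ * Real.sqrt n) * R₀ / lam := by
        by_contra hgt
        push_neg at hgt
        rcases eq_or_lt_of_le hT0 with h0 | h0
        · rw [← h0] at hgt
          rw [hW0] at hgt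
          simp at hgt
          exact absurd hgt (not_lt.2 hBpos.le)
        · have hopen : {s : ℝ | 3 * (C₁ * Real.sqrt n) * R₀ / lam < ‖W s - W₀‖} ∈ nhds T :=
            (isOpen_lt continuous_const hφcont).mem_nhds hgt
          obtain ⟨ε, hε, hball⟩ := Metric.mem_nhds_iff.1 hopen
          have hsT : max (T / 2) (T - ε / 2) < T := by
            apply max_lt <;> linarith
          have hs0 : 0 ≤ max (T / 2) (T - ε / 2) :=
            le_trans (by linarith) (le_max_left _ _)
          have hsball : max (T / 2) (T - ε / 2) ∈ Metric.ball T ε := by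
            rw [Metric.mem_ball, Real.dist_eq, abs_of_nonpos (by linarith [hsT.le])]
            have := le_max_right (T / 2) (T - ε / 2)
            linarith
          exact absurd (hbelow _ hs0 hsT) (not_le.2 (hball hsball))
      have hIcc : ∀ s ∈ Set.Icc (0:ℝ) T, ‖W s - W₀‖ ≤ 3 * (C₁ * Real.sqrt n) * R₀ / lam := by
        intro s hs
        rcases lt_or_eq_of_le hs.2 with h | h
        · exact hbelow s hs.1 h
        · rw [h]; exact hφT
      have hdec := stepA T hT0 hIcc
      have hless := stepB T hT0 hdec T ⟨hT0, le_rfl⟩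
      have hφTlt : ‖W T - W₀‖ < 3 * (C₁ * Real.sqrt n) * R₀ / lam := by
        have hepos := Real.exp_pos (-(η₀ * lam / 3 * T))
        nlinarith [hless, hBpos]
      have hopen2 : {s : ℝ | ‖W s - W₀‖ < 3 * (C₁ * Real.sqrt n) * R₀ / lam} ∈ nhds T :=
        (isOpen_lt hφcont continuous_const).mem_nhds hφTlt
      obtain ⟨ε, hε, hball⟩ := Metric.mem_nhds_iff.1 hopen2
      obtain ⟨v, hvV, hvlt⟩ := exists_lt_of_csInf_lt hne
        (show sInf {u : ℝ | 0 ≤ u ∧ 3 * (C₁ * Real.sqrt n) * R₀ / lam < ‖W u - W₀‖} < T + ε / 2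
          by rw [← hTdef]; linarith)
      have hvT : T ≤ v := csInf_le hbdd hvV
      have hvball : v ∈ Metric.ball T ε := by
        rw [Metric.mem_ball, Real.dist_eq, abs_of_nonneg (by linarith)]
        linarith
      exact absurd (hball hvball) (not_lt.2 hvV.2.le)
  -- conclude
  intro t ht
  have hdec := stepA t ht (fun s hs => key s hs.1)
  have hexp : -(η₀ * lam * t) / 3 = -(η₀ * lam / 3 * t) := by ring
  refine ⟨?_, ?_, ?_⟩
  · rw [hexp]
    exact hdec t ⟨ht, le_rfl⟩
  · rw [hexp]
    exact stepB t ht hdec t ⟨ht, le_rfl⟩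
  · intro v
    rw [NTKAux.quad_eq_norm_SS d m n σ a X hσ]
    exact hlow (W t) (key t ht) v
end
end

section
/- Pointwise Frobenius bound on the difference of full and Taylorized Jacobians (inequality (A.5) in the proof of Lemma A.2(a)): Assume σ is k-times continuously differentiable with σ^{(k)} L-Lipschitz, and ‖x_i‖ = 1 for all i. Then for every weight matrix W ∈ (ℝ^d)^m, ‖J(W) − J^{(k)}(W)‖_F² = Σ_{i=1}^n (1/m) Σ_{r=1}^m (σ'(⟨w_r, x_i⟩) − p'_{r,i}(⟨w_r, x_i⟩))² ‖x_i‖² ≤ n (L/k!)² (1/m) Σ_{r=1}^m ‖w_r − w_{r,0}‖^{2k}, where p_{r,i}(t) = Σ_{j=0}^k (σ^{(j)}(⟨w_{r,0}, x_i⟩)/j!)(t − ⟨w_{r,0}, x_i⟩)^j is the degree-k Taylor polynomial of σ around ⟨w_{r,0}, x_i⟩. -/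
open scoped BigOperators RealInnerProductSpace
noncomputable section

lemma hasGradientAt_net_like (d m : ℕ) (c : ℝ) (a : Fin m → ℝ)
    (φ : Fin m → ℝ → ℝ) (φ' : Fin m → ℝ) (x : EuclideanSpace ℝ (Fin d)) (W : Wts d m)
    (hφ : ∀ r, HasDerivAt (φ r) (φ' r) ⟪W r, x⟫) :
    HasGradientAt (fun V : Wts d m => c * ∑ r, a r * φ r ⟪V r, x⟫)
      ((WithLp.toLp 2 (fun r => (c * a r * φ' r) • x) : Wts d m)) W := by
  rw [hasGradientAt_iff_hasFDerivAt]
  set ℓ : Fin m → (Wts d m →L[ℝ] ℝ) := fun r =>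
    (innerSL ℝ x).comp (PiLp.proj (𝕜 := ℝ) 2 (fun _ : Fin m => EuclideanSpace ℝ (Fin d)) r)
    with hℓ
  have hproj : ∀ r, HasFDerivAt (fun V : Wts d m => ⟪V r, x⟫) (ℓ r) W := by
    intro r
    have h1 := (ℓ r).hasFDerivAt (x := W)
    have h2 : (fun V : Wts d m => ⟪V r, x⟫) = fun V : Wts d m => ℓ r V := by
      funext V
      simp only [hℓ, ContinuousLinearMap.coe_comp', Function.comp_apply, innerSL_apply_apply,
        PiLp.proj_apply, PiLp.inner_apply, RCLike.inner_apply, conj_trivial]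
      exact Finset.sum_congr rfl fun _ _ => mul_comm _ _
    rw [h2]
    exact h1
  have hsum : HasFDerivAt (fun V : Wts d m => ∑ r, a r * φ r ⟪V r, x⟫)
      (∑ r, a r • (φ' r • ℓ r)) W :=
    HasFDerivAt.fun_sum (fun r _ => (((hφ r).comp_hasFDerivAt W (hproj r)).const_mul (a r)))
  have hfull := hsum.const_mul c
  refine hfull.congr_fderiv ?_
  ext V
  simp only [InnerProductSpace.toDual_apply_apply, PiLp.inner_apply,
    ContinuousLinearMap.coe_smul', Pi.smul_apply, ContinuousLinearMap.coe_sum',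
    Finset.sum_apply, ContinuousLinearMap.coe_comp', Function.comp_apply,
    innerSL_apply_apply, smul_eq_mul, hℓ, PiLp.proj_apply, PiLp.smul_apply,
    RCLike.inner_apply, conj_trivial, Finset.mul_sum]
  exact Finset.sum_congr rfl fun r _ => Finset.sum_congr rfl fun i _ => by ring

lemma hasDerivAt_taylorPoly (f : ℝ → ℝ) (K : ℕ) (x₀ u : ℝ) :
    HasDerivAt (fun s => ∑ j ∈ Finset.range (K + 1),
        iteratedDeriv j f x₀ / (j.factorial : ℝ) * (s - x₀) ^ j)
      (∑ i ∈ Finset.range K,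
        iteratedDeriv (i + 1) f x₀ / (i.factorial : ℝ) * (u - x₀) ^ i) u := by
  have h : ∀ j : ℕ, HasDerivAt
      (fun s : ℝ => iteratedDeriv j f x₀ / (j.factorial : ℝ) * (s - x₀) ^ j)
      (iteratedDeriv j f x₀ / (j.factorial : ℝ) * (j * (u - x₀) ^ (j - 1))) u := by
    intro j
    have h1 : HasDerivAt (fun s : ℝ => (s - x₀) ^ j) ((j : ℝ) * (u - x₀) ^ (j - 1)) u := by
      simpa [Function.comp_def] using (hasDerivAt_pow j (u - x₀)).comp u ((hasDerivAt_id u).sub_const x₀)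
    exact h1.const_mul _
  have hs := HasDerivAt.fun_sum (fun j (_ : j ∈ Finset.range (K + 1)) => h j)
  refine hs.congr_deriv ?_
  rw [Finset.sum_range_succ']
  simp only [Nat.cast_zero, pow_zero, zero_mul, mul_zero, add_zero]
  refine Finset.sum_congr rfl fun i _ => ?_
  have hfac : ((i + 1).factorial : ℝ) = (i + 1) * (i.factorial : ℝ) := by
    push_cast [Nat.factorial_succ]; ring
  have h0 : ((i.factorial : ℝ)) ≠ 0 := Nat.cast_ne_zero.mpr (Nat.factorial_ne_zero i)
  have h1 : ((i : ℝ) + 1) ≠ 0 := by positivity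
  rw [hfac]
  field_simp
  rw [Nat.add_sub_cancel]; push_cast; ring

lemma abs_integral_abs_pow (p : ℕ) (h : ℝ) :
    |∫ t in (0:ℝ)..h, |t| ^ p| = |h| ^ (p + 1) / (p + 1) := by
  rcases le_or_gt 0 h with hh | hh
  · have : ∫ t in (0:ℝ)..h, |t| ^ p = ∫ t in (0:ℝ)..h, t ^ p := by
      refine intervalIntegral.integral_congr fun t ht => ?_
      rw [Set.uIcc_of_le hh] at ht
      rw [abs_of_nonneg ht.1]
    rw [this, integral_pow, zero_pow (by omega), sub_zero, abs_div, abs_pow,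
      abs_of_nonneg hh, abs_of_nonneg (by positivity : (0:ℝ) ≤ (p:ℝ)+1)]
  · have h1 : ∫ t in (0:ℝ)..h, |t| ^ p = ∫ t in (0:ℝ)..h, (-t) ^ p := by
      refine intervalIntegral.integral_congr fun t ht => ?_
      rw [Set.uIcc_of_ge hh.le] at ht
      rw [abs_of_nonpos ht.2]
    have h2 : ∫ t in (0:ℝ)..h, (-t) ^ p = ∫ t in (-h)..(0:ℝ), t ^ p := by
      simpa using intervalIntegral.integral_comp_neg (a := (0:ℝ)) (b := h) (fun t => t ^ p)
    rw [h1, h2, integral_pow, zero_pow (by omega), zero_sub, abs_div, abs_neg, abs_pow,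
      abs_neg, abs_of_nonneg (by positivity : (0:ℝ) ≤ (p:ℝ)+1)]

lemma taylor_lipschitz (L : ℝ) : ∀ (j : ℕ) (f : ℝ → ℝ), ContDiff ℝ j f →
    (∀ s t : ℝ, |iteratedDeriv j f s - iteratedDeriv j f t| ≤ L * |s - t|) →
    ∀ x₀ x : ℝ,
    |f x - ∑ i ∈ Finset.range (j + 1),
        iteratedDeriv i f x₀ / (i.factorial : ℝ) * (x - x₀) ^ i|
      ≤ L / ((j + 1).factorial : ℝ) * |x - x₀| ^ (j + 1) := by
  intro j
  induction j with
  | zero =>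
    intro f _ hL x₀ x
    simpa using hL x x₀
  | succ j ih =>
    intro f hf hL x₀ x
    have hL0 : 0 ≤ L := by
      have h01 := hL 1 0
      have h02 := abs_nonneg (iteratedDeriv (j + 1) f 1 - iteratedDeriv (j + 1) f 0)
      simp only [sub_zero, abs_one, mul_one] at h01
      linarith
    have hone : (1 : WithTop ℕ∞) ≤ ((j+1 : ℕ) : WithTop ℕ∞) := by
      exact_mod_cast Nat.one_le_iff_ne_zero.mpr (Nat.succ_ne_zero j)
    have hdiff : Differentiable ℝ f := hf.differentiable (by simp)
    set g := deriv f with hg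
    have hgc : ContDiff ℝ j g := by
      have := (contDiff_succ_iff_deriv (n := (j : WithTop ℕ∞)) (f := f)).mp
        (by exact_mod_cast hf)
      exact this.2.2
    have hiter : iteratedDeriv j g = iteratedDeriv (j + 1) f := (iteratedDeriv_succ' ..).symm
    have hLg : ∀ s t : ℝ, |iteratedDeriv j g s - iteratedDeriv j g t| ≤ L * |s - t| := by
      intro s t; rw [hiter]; exact hL s t
    have ihg := ih g hgc hLg x₀
    set R : ℝ → ℝ := fun x => f x - ∑ i ∈ Finset.range (j + 2),
        iteratedDeriv i f x₀ / (i.factorial : ℝ) * (x - x₀) ^ i with hR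
    have hR' : ∀ u : ℝ, HasDerivAt R
        (g u - ∑ i ∈ Finset.range (j + 1),
          iteratedDeriv i g x₀ / (i.factorial : ℝ) * (u - x₀) ^ i) u := by
      intro u
      have h1 : HasDerivAt f (g u) u := (hdiff u).hasDerivAt
      have h3 := h1.sub (hasDerivAt_taylorPoly f (j + 1) x₀ u)
      refine h3.congr_deriv ?_
      congr 1
      refine Finset.sum_congr rfl fun i _ => ?_
      rw [iteratedDeriv_succ', ← hg]
    have hRx₀ : R x₀ = 0 := by
      simp only [hR]
      rw [Finset.sum_eq_single 0]
      · simp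
      · intro i _ hi; simp [zero_pow hi]
      · simp
    have hcontg : Continuous g := hf.continuous_deriv hone
    have hcontR' : Continuous fun u => g u - ∑ i ∈ Finset.range (j + 1),
        iteratedDeriv i g x₀ / (i.factorial : ℝ) * (u - x₀) ^ i :=
      hcontg.sub (continuous_finset_sum _ fun i _ =>
        continuous_const.mul ((continuous_id.sub continuous_const).pow i))
    have hftc : R x - R x₀ = ∫ u in x₀..x, (g u - ∑ i ∈ Finset.range (j + 1),
        iteratedDeriv i g x₀ / (i.factorial : ℝ) * (u - x₀) ^ i) :=
      (intervalIntegral.integral_eq_sub_of_hasDerivAt (fun u _ => hR' u)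
        (hcontR'.intervalIntegrable _ _)).symm
    have hbound : |R x| ≤ |∫ u in x₀..x, L / ((j + 1).factorial : ℝ) * |u - x₀| ^ (j + 1)| := by
      rw [show |R x| = ‖R x - R x₀‖ by rw [hRx₀, sub_zero]; rfl, hftc]
      apply intervalIntegral.norm_integral_le_abs_of_norm_le
      · filter_upwards with t
        exact ihg t
      · exact (continuous_const.mul
          (((continuous_id.sub continuous_const).abs).pow _)).intervalIntegrable _ _
    have hInt : |∫ u in x₀..x, L / ((j + 1).factorial : ℝ) * |u - x₀| ^ (j + 1)|
        = |L / ((j + 1).factorial : ℝ)| * (|x - x₀| ^ (j + 2) / ((j:ℝ) + 2)) := by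
      rw [intervalIntegral.integral_const_mul, abs_mul]
      congr 1
      have hcs := intervalIntegral.integral_comp_sub_right (a := x₀) (b := x)
        (fun t => |t| ^ (j + 1)) x₀
      rw [hcs, sub_self, abs_integral_abs_pow]
      push_cast; ring_nf
    have hfacpos : (0:ℝ) < ((j + 1).factorial : ℝ) := by
      exact_mod_cast Nat.factorial_pos (j + 1)
    have hfinal : |L / ((j + 1).factorial : ℝ)| * (|x - x₀| ^ (j + 2) / ((j:ℝ) + 2))
        = L / ((j + 1 + 1).factorial : ℝ) * |x - x₀| ^ (j + 1 + 1) := by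
      rw [abs_of_nonneg (div_nonneg hL0 hfacpos.le)]
      have hf1 : ((j + 1 + 1).factorial : ℝ) = ((j:ℝ) + 2) * ((j + 1).factorial : ℝ) := by
        rw [Nat.factorial_succ]; push_cast; ring
      rw [hf1, mul_comm ((j:ℝ)+2) _, ← div_div]
      ring
    calc |R x| ≤ _ := hbound
      _ = _ := hInt
      _ = _ := hfinal

/-- pointwise Frobenius bound on the difference of the full and Taylorized
Jacobians (inequality (A.5) in the proof of Lemma A.2(a)). -/
theorem jacobian_difference_pointwise
    (d m n k : ℕ) (hm : 1 ≤ m) (hk : 1 ≤ k) (σ : ℝ → ℝ) (hσ : ContDiff ℝ k σ)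
    (L : ℝ) (hlip : ∀ s t : ℝ, |iteratedDeriv k σ s - iteratedDeriv k σ t| ≤ L * |s - t|)
    (a : Fin m → ℝ) (ha : ∀ r, a r = 1 ∨ a r = -1)
    (W₀ : Wts d m) (X : Fin n → EuclideanSpace ℝ (Fin d)) (hX : ∀ i, ‖X i‖ = 1)
    (W : Wts d m) :
    (∑ i, ‖Jrow d m n σ a X W i - JrowT d m n k σ a W₀ X W i‖ ^ 2
      = ∑ i, (1 / (m : ℝ)) *
          ∑ r, (deriv σ ⟪W r, X i⟫ -
              deriv (fun s : ℝ => ∑ j ∈ Finset.range (k + 1),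
                  (iteratedDeriv j σ ⟪W₀ r, X i⟫ / (j.factorial : ℝ)) * (s - ⟪W₀ r, X i⟫) ^ j)
                ⟪W r, X i⟫) ^ 2 * ‖X i‖ ^ 2) ∧
    ∑ i, ‖Jrow d m n σ a X W i - JrowT d m n k σ a W₀ X W i‖ ^ 2
      ≤ (n : ℝ) * (L / (k.factorial : ℝ)) ^ 2 *
          ((1 / (m : ℝ)) * ∑ r, ‖W r - W₀ r‖ ^ (2 * k)) := by
  have hL0 : 0 ≤ L := by
    have h01 := hlip 1 0
    have h02 := abs_nonneg (iteratedDeriv k σ 1 - iteratedDeriv k σ 0)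
    simp only [sub_zero, abs_one, mul_one] at h01
    linarith
  set c : ℝ := (Real.sqrt m)⁻¹ with hc
  have hm0 : (0:ℝ) < m := by exact_mod_cast hm
  have hc2 : c ^ 2 = 1 / (m : ℝ) := by
    rw [hc, ← one_div, div_pow, one_pow, Real.sq_sqrt hm0.le]
  set P : Fin n → Fin m → ℝ → ℝ := fun i r s => ∑ j ∈ Finset.range (k + 1),
      iteratedDeriv j σ ⟪W₀ r, X i⟫ / (j.factorial : ℝ) * (s - ⟪W₀ r, X i⟫) ^ j with hP
  set D : Fin n → Fin m → ℝ := fun i r =>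
      deriv σ ⟪W r, X i⟫ - deriv (P i r) ⟪W r, X i⟫ with hD
  have hσ1 : (1 : WithTop ℕ∞) ≤ (k : WithTop ℕ∞) := by exact_mod_cast hk
  -- gradients
  have hgrad1 : ∀ i, Jrow d m n σ a X W i
      = (WithLp.toLp 2 (fun r => (c * a r * deriv σ ⟪W r, X i⟫) • X i) : Wts d m) := by
    intro i
    exact (hasGradientAt_net_like d m c a (fun _ => σ)
      (fun r => deriv σ ⟪W r, X i⟫) (X i) W
      (fun r => (hσ.differentiable (by simp; omega) _).hasDerivAt)).gradient
  have hgrad2 : ∀ i, JrowT d m n k σ a W₀ X W i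
      = (WithLp.toLp 2 (fun r => (c * a r * deriv (P i r) ⟪W r, X i⟫) • X i) : Wts d m) := by
    intro i
    have hfun : (fun V : Wts d m => netT d m k σ a W₀ V (X i))
        = fun V => c * ∑ r, a r * P i r ⟪V r, X i⟫ := by
      funext V
      simp only [netT, hP, inner_sub_left, hc]
    have hder : ∀ r, HasDerivAt (P i r) (deriv (P i r) ⟪W r, X i⟫) ⟪W r, X i⟫ := by
      intro r
      have h := hasDerivAt_taylorPoly σ k ⟪W₀ r, X i⟫ ⟪W r, X i⟫
      rw [hP]
      rw [h.deriv]
      exact h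
    unfold JrowT
    rw [hfun]
    exact (hasGradientAt_net_like d m c a (P i)
      (fun r => deriv (P i r) ⟪W r, X i⟫) (X i) W hder).gradient
  -- componentwise difference
  have hdiffnorm : ∀ i, ‖Jrow d m n σ a X W i - JrowT d m n k σ a W₀ X W i‖ ^ 2
      = (1 / (m : ℝ)) * ∑ r, D i r ^ 2 * ‖X i‖ ^ 2 := by
    intro i
    rw [PiLp.norm_sq_eq_of_L2]
    have hcomp : ∀ r : Fin m,
        (Jrow d m n σ a X W i - JrowT d m n k σ a W₀ X W i) r
        = (c * a r * D i r) • X i := by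
      intro r
      rw [PiLp.sub_apply, hgrad1 i, hgrad2 i]
      rw [← sub_smul]
      congr 1
      rw [hD, mul_sub]
    calc ∑ r, ‖(Jrow d m n σ a X W i - JrowT d m n k σ a W₀ X W i) r‖ ^ 2
        = ∑ r, (c * a r * D i r) ^ 2 * ‖X i‖ ^ 2 := by
          refine Finset.sum_congr rfl fun r _ => ?_
          rw [hcomp r, norm_smul, mul_pow, Real.norm_eq_abs, sq_abs]
      _ = (1 / (m : ℝ)) * ∑ r, D i r ^ 2 * ‖X i‖ ^ 2 := by
          rw [Finset.mul_sum]
          refine Finset.sum_congr rfl fun r _ => ?_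
          have ha2 : a r ^ 2 = 1 := by rcases ha r with h | h <;> rw [h] <;> norm_num
          rw [mul_pow, mul_pow, hc2, ha2]
          ring
  constructor
  · exact Finset.sum_congr rfl fun i _ => hdiffnorm i
  · -- the bound
    obtain ⟨k', rfl⟩ : ∃ k', k = k' + 1 := ⟨k - 1, (Nat.succ_pred_eq_of_pos hk).symm⟩
    have hdercd : ContDiff ℝ k' (deriv σ) := by
      have := (contDiff_succ_iff_deriv (n := (k' : WithTop ℕ∞)) (f := σ)).mp
        (by exact_mod_cast hσ)
      exact this.2.2
    have hlip' : ∀ s t : ℝ, |iteratedDeriv k' (deriv σ) s - iteratedDeriv k' (deriv σ) t|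
        ≤ L * |s - t| := by
      intro s t
      rw [← iteratedDeriv_succ']
      exact hlip s t
    have hDbound : ∀ i r, D i r ^ 2
        ≤ (L / ((k' + 1).factorial : ℝ)) ^ 2 * ‖W r - W₀ r‖ ^ (2 * (k' + 1)) := by
      intro i r
      have htay := taylor_lipschitz L k' (deriv σ) hdercd hlip' ⟪W₀ r, X i⟫ ⟪W r, X i⟫
      have hQ : deriv (P i r) ⟪W r, X i⟫ = ∑ j ∈ Finset.range (k' + 1),
          iteratedDeriv j (deriv σ) ⟪W₀ r, X i⟫ / (j.factorial : ℝ)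
            * (⟪W r, X i⟫ - ⟪W₀ r, X i⟫) ^ j := by
        rw [hP, (hasDerivAt_taylorPoly σ (k' + 1) ⟪W₀ r, X i⟫ ⟪W r, X i⟫).deriv]
        exact Finset.sum_congr rfl fun j _ => by rw [iteratedDeriv_succ']
      have h1 : |D i r| ≤ L / ((k' + 1).factorial : ℝ)
          * |⟪W r, X i⟫ - ⟪W₀ r, X i⟫| ^ (k' + 1) := by
        rw [hD]
        simp only
        rw [hQ]
        exact htay
      have hinner : |⟪W r, X i⟫ - ⟪W₀ r, X i⟫| ≤ ‖W r - W₀ r‖ := by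
        rw [← inner_sub_left]
        calc |⟪W r - W₀ r, X i⟫| ≤ ‖W r - W₀ r‖ * ‖X i‖ := abs_real_inner_le_norm _ _
          _ = ‖W r - W₀ r‖ := by rw [hX i, mul_one]
      have h2 : |D i r| ≤ L / ((k' + 1).factorial : ℝ) * ‖W r - W₀ r‖ ^ (k' + 1) := by
        refine h1.trans ?_
        have hfac : (0:ℝ) ≤ L / ((k' + 1).factorial : ℝ) := by positivity
        exact mul_le_mul_of_nonneg_left
          (pow_le_pow_left₀ (abs_nonneg _) hinner _) hfac
      calc D i r ^ 2 = |D i r| ^ 2 := (sq_abs _).symm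
        _ ≤ (L / ((k' + 1).factorial : ℝ) * ‖W r - W₀ r‖ ^ (k' + 1)) ^ 2 :=
            pow_le_pow_left₀ (abs_nonneg _) h2 2
        _ = (L / ((k' + 1).factorial : ℝ)) ^ 2 * ‖W r - W₀ r‖ ^ (2 * (k' + 1)) := by
            rw [mul_pow, ← pow_mul, mul_comm (k' + 1) 2]
    calc ∑ i, ‖Jrow d m n σ a X W i - JrowT d m n (k' + 1) σ a W₀ X W i‖ ^ 2
        = ∑ i, (1 / (m : ℝ)) * ∑ r, D i r ^ 2 * ‖X i‖ ^ 2 :=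
          Finset.sum_congr rfl fun i _ => hdiffnorm i
      _ ≤ ∑ i : Fin n, (1 / (m : ℝ)) * ∑ r, (L / ((k' + 1).factorial : ℝ)) ^ 2
            * ‖W r - W₀ r‖ ^ (2 * (k' + 1)) := by
          refine Finset.sum_le_sum fun i _ => ?_
          refine mul_le_mul_of_nonneg_left ?_ (by positivity)
          refine Finset.sum_le_sum fun r _ => ?_
          rw [hX i, one_pow, mul_one]
          exact hDbound i r
      _ = (n : ℝ) * (L / (((k' + 1).factorial : ℝ))) ^ 2 *
            ((1 / (m : ℝ)) * ∑ r, ‖W r - W₀ r‖ ^ (2 * (k' + 1))) := by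
          rw [Finset.sum_const, Finset.card_univ, Fintype.card_fin]
          rw [← Finset.mul_sum, nsmul_eq_mul]
          ring
end
end

section
/- Jacobian-difference bound on a Frobenius ball (boundedness part of Lemma A.2(a)): Assume σ is k-times continuously differentiable with σ^{(k)} L-Lipschitz, and ‖x_i‖ = 1 for all i. Then for every C₀ > 0 and every W ∈ (ℝ^d)^m with ‖W − W₀‖_F ≤ C₀, one has ‖J(W) − J^{(k)}(W)‖_F ≤ (L √n / k!) · C₀^k · m^{−1/2}. -/
open scoped BigOperators RealInnerProductSpace
noncomputable section

/-! ### Auxiliary lemmas -/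

lemma master_grad (d m : ℕ) (x : EuclideanSpace ℝ (Fin d)) (W : Wts d m)
    (φ : Fin m → ℝ → ℝ) (φ' : Fin m → ℝ)
    (h : ∀ r, HasDerivAt (φ r) (φ' r) ⟪W r, x⟫) :
    HasGradientAt (fun V : Wts d m => ∑ r, φ r ⟪V r, x⟫)
      (WithLp.toLp 2 (fun r => φ' r • x) : Wts d m) W := by
  rw [hasGradientAt_iff_hasFDerivAt]
  set ℓ : Fin m → (Wts d m →L[ℝ] ℝ) := fun r =>
    (innerSL ℝ x).comp (PiLp.proj 2 (fun _ : Fin m => EuclideanSpace ℝ (Fin d)) r) with hℓ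
  have hℓapp : ∀ r (V : Wts d m), ℓ r V = ⟪V r, x⟫ := by
    intro r V
    simp only [hℓ, ContinuousLinearMap.comp_apply, PiLp.proj_apply, innerSL_apply_apply]
    exact real_inner_comm (V r) x
  have hF : HasFDerivAt (fun V : Wts d m => ∑ r, φ r ⟪V r, x⟫)
      (∑ r, φ' r • ℓ r) W := by
    have key : HasFDerivAt (fun V : Wts d m => ∑ r : Fin m, φ r (ℓ r V))
        (∑ r : Fin m, φ' r • ℓ r) W := by
      apply HasFDerivAt.fun_sum
      intro r _
      have hr : HasDerivAt (φ r) (φ' r) (ℓ r W) := (hℓapp r W).symm ▸ h r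
      exact hr.comp_hasFDerivAt W ((ℓ r).hasFDerivAt)
    have : (fun V : Wts d m => ∑ r : Fin m, φ r (ℓ r V))
        = fun V : Wts d m => ∑ r, φ r ⟪V r, x⟫ := by
      funext V; exact Finset.sum_congr rfl fun r _ => by rw [hℓapp]
    rwa [this] at key
  refine hF.congr_fderiv (Eq.symm ?_)
  ext V
  rw [InnerProductSpace.toDual_apply_apply, PiLp.inner_apply, ContinuousLinearMap.sum_apply]
  refine Finset.sum_congr rfl fun r _ => ?_
  rw [PiLp.toLp_apply, ContinuousLinearMap.smul_apply, hℓapp, real_inner_smul_left, smul_eq_mul,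
    real_inner_comm]

lemma taylor_remainder_lip (L : ℝ) :
    ∀ (q : ℕ) (g : ℝ → ℝ), ContDiff ℝ q g →
    (∀ s t : ℝ, |iteratedDeriv q g s - iteratedDeriv q g t| ≤ L * |s - t|) →
    ∀ s₀ δ : ℝ,
      |g (s₀ + δ) - ∑ j ∈ Finset.range (q + 1), iteratedDeriv j g s₀ * δ ^ j / (j.factorial : ℝ)|
        ≤ L * |δ| ^ (q + 1) / ((q + 1).factorial : ℝ) := by
  intro q
  induction q with
  | zero =>
    intro g _ hlip s₀ δ
    simpa using hlip (s₀ + δ) s₀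
  | succ q IH =>
    intro g hg hlip s₀ δ
    have hdiff : Differentiable ℝ g :=
      hg.differentiable (by simp)
    have hg' : ContDiff ℝ q (deriv g) := by
      have hg2 : ContDiff ℝ ((q : ℕ∞) + 1) g := by exact_mod_cast hg
      exact (contDiff_succ_iff_deriv.mp hg2).2.2
    have hlip' : ∀ s t : ℝ,
        |iteratedDeriv q (deriv g) s - iteratedDeriv q (deriv g) t| ≤ L * |s - t| := by
      intro s t
      have : iteratedDeriv q (deriv g) = iteratedDeriv (q + 1) g :=
        (iteratedDeriv_succ' (n := q) (f := g)).symm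
      rw [this]; exact hlip s t
    set h : ℝ → ℝ := fun u =>
      g (s₀ + u) - ∑ j ∈ Finset.range (q + 2), iteratedDeriv j g s₀ * u ^ j / (j.factorial : ℝ)
      with hh
    set h' : ℝ → ℝ := fun u =>
      deriv g (s₀ + u) -
        ∑ j ∈ Finset.range (q + 1), iteratedDeriv j (deriv g) s₀ * u ^ j / (j.factorial : ℝ)
      with hh'
    have h0 : h 0 = 0 := by
      simp [hh, Finset.sum_range_succ']
    have hd : ∀ u, HasDerivAt h (h' u) u := by
      intro u
      have h1 : HasDerivAt (fun u => g (s₀ + u)) (deriv g (s₀ + u)) u := by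
        simpa [Function.comp_def] using (hdiff (s₀ + u)).hasDerivAt.comp u ((hasDerivAt_id u).const_add s₀)
      have h2 : HasDerivAt (fun u : ℝ => ∑ j ∈ Finset.range (q + 2),
            iteratedDeriv j g s₀ * u ^ j / (j.factorial : ℝ))
          (∑ j ∈ Finset.range (q + 1),
            iteratedDeriv j (deriv g) s₀ * u ^ j / (j.factorial : ℝ)) u := by
        have h3 : HasDerivAt (fun u : ℝ => ∑ j ∈ Finset.range (q + 2),
              iteratedDeriv j g s₀ * u ^ j / (j.factorial : ℝ))
            (∑ j ∈ Finset.range (q + 2),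
              iteratedDeriv j g s₀ / (j.factorial : ℝ) * ((j : ℝ) * u ^ (j - 1))) u := by
          apply HasDerivAt.fun_sum
          intro j _
          have := (hasDerivAt_pow j u).const_mul (iteratedDeriv j g s₀ / (j.factorial : ℝ))
          simpa only [div_mul_eq_mul_div] using this
        convert h3 using 1
        rw [Finset.sum_range_succ'
          (fun j => iteratedDeriv j g s₀ / (j.factorial : ℝ) * ((j : ℝ) * u ^ (j - 1))) (q + 1)]
        simp only [Nat.cast_zero, zero_mul, mul_zero, add_zero]
        refine Finset.sum_congr rfl fun j _ => ?_
        rw [iteratedDeriv_succ']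
        simp only [Nat.factorial_succ, Nat.cast_mul, Nat.cast_add, Nat.cast_one,
          Nat.add_sub_cancel]
        field_simp
      simpa [hh, hh'] using h1.fun_sub h2
    have hbound : ∀ u : ℝ, |h' u| ≤ L * |u| ^ (q + 1) / ((q + 1).factorial : ℝ) := fun u =>
      IH (deriv g) hg' hlip' s₀ u
    have key : |h δ| ≤ L * |δ| ^ (q + 2) / ((q + 2).factorial : ℝ) := by
      have hf : ∀ t : ℝ, HasDerivAt (fun t => h (t * δ)) (h' (t * δ) * δ) t := by
        intro t
        simpa [Function.comp_def] using (hd (t * δ)).comp t ((hasDerivAt_id t).mul_const δ)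
      have hcont : Continuous h' := by
        have : Continuous (deriv g) := hg'.continuous
        exact (this.comp (continuous_const.add continuous_id)).sub
          (continuous_finset_sum _ fun j _ => (continuous_const.mul (continuous_pow j)).div_const _)
      have hci : Continuous fun t : ℝ => h' (t * δ) * δ :=
        ((hcont.comp (continuous_id.mul continuous_const)).mul continuous_const)
      have hFTC : h δ - h 0 = ∫ t in (0:ℝ)..1, h' (t * δ) * δ := by
        have := intervalIntegral.integral_eq_sub_of_hasDerivAt
          (f := fun t => h (t * δ)) (f' := fun t => h' (t * δ) * δ)
          (fun t _ => hf t) (hci.intervalIntegrable 0 1)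
        simpa using this.symm
      rw [h0, sub_zero] at hFTC
      calc |h δ| = ‖∫ t in (0:ℝ)..1, h' (t * δ) * δ‖ := by rw [hFTC]; rfl
        _ ≤ ∫ t in (0:ℝ)..1, ‖h' (t * δ) * δ‖ :=
            intervalIntegral.norm_integral_le_integral_norm (by norm_num)
        _ ≤ ∫ t in (0:ℝ)..1, (L * |δ| ^ (q + 2) / ((q + 1).factorial : ℝ)) * t ^ (q + 1) := by
            apply intervalIntegral.integral_mono_on (by norm_num)
            · exact (hci.norm).intervalIntegrable 0 1
            · exact ((continuous_const.mul (continuous_pow (q + 1))).intervalIntegrable 0 1)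
            · intro t ht
              have h1 : ‖h' (t * δ) * δ‖ = |h' (t * δ)| * |δ| := abs_mul _ _
              rw [h1]
              have h2 := hbound (t * δ)
              have h3 : |t * δ| = t * |δ| := by
                rw [abs_mul, abs_of_nonneg ht.1]
              calc |h' (t * δ)| * |δ|
                  ≤ (L * |t * δ| ^ (q + 1) / ((q + 1).factorial : ℝ)) * |δ| :=
                    mul_le_mul_of_nonneg_right h2 (abs_nonneg δ)
                _ = (L * |δ| ^ (q + 2) / ((q + 1).factorial : ℝ)) * t ^ (q + 1) := by
                    rw [h3, mul_pow]
                    ring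
        _ = L * |δ| ^ (q + 2) / ((q + 2).factorial : ℝ) := by
            rw [intervalIntegral.integral_const_mul, integral_pow]
            have h5 : ((q + 1).factorial : ℝ) ≠ 0 := by positivity
            have h6 : ((q : ℝ) + 1 + 1) ≠ 0 := by positivity
            rw [Nat.factorial_succ (q + 1)]
            push_cast
            simp only [one_pow, zero_pow (by omega : q + 1 + 1 ≠ 0), sub_zero]
            rw [div_mul_div_comm, mul_one, mul_comm ((q : ℝ) + 1 + 1)]
    exact key

lemma sum_pow_le_pow_sum' {ι : Type*} (s : Finset ι) (f : ι → ℝ)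
    (hf : ∀ i ∈ s, 0 ≤ f i) : ∀ k : ℕ, ∑ i ∈ s, f i ^ (k + 1) ≤ (∑ i ∈ s, f i) ^ (k + 1) := by
  intro k
  induction k with
  | zero => simp
  | succ k IH =>
    calc ∑ i ∈ s, f i ^ (k + 2) = ∑ i ∈ s, f i ^ (k + 1) * f i := by
          refine Finset.sum_congr rfl fun i _ => by ring
      _ ≤ ∑ i ∈ s, f i ^ (k + 1) * ∑ j ∈ s, f j := by
          refine Finset.sum_le_sum fun i hi => ?_
          exact mul_le_mul_of_nonneg_left (Finset.single_le_sum hf hi)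
            (pow_nonneg (hf i hi) _)
      _ = (∑ i ∈ s, f i ^ (k + 1)) * ∑ j ∈ s, f j := by rw [← Finset.sum_mul]
      _ ≤ (∑ i ∈ s, f i) ^ (k + 1) * ∑ j ∈ s, f j :=
          mul_le_mul_of_nonneg_right IH (Finset.sum_nonneg hf)
      _ = (∑ i ∈ s, f i) ^ (k + 2) := by ring

lemma Jrow_eq (d m n : ℕ) (σ : ℝ → ℝ) (a : Fin m → ℝ)
    (X : Fin n → EuclideanSpace ℝ (Fin d)) (W : Wts d m)
    (hσ1 : Differentiable ℝ σ) (i : Fin n) :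
    Jrow d m n σ a X W i
      = (WithLp.toLp 2 (fun r => ((Real.sqrt m)⁻¹ * (a r * deriv σ ⟪W r, X i⟫)) • X i) : Wts d m) := by
  apply HasGradientAt.gradient
  have hfun : (fun V => net d m σ a V (X i))
      = fun V : Wts d m => ∑ r, (Real.sqrt m)⁻¹ * (a r * σ ⟪V r, X i⟫) := by
    funext V; rw [net, Finset.mul_sum]
  rw [show (fun V => net d m σ a V (X i))
      = fun V : Wts d m => ∑ r, (Real.sqrt m)⁻¹ * (a r * σ ⟪V r, X i⟫) from hfun]
  exact master_grad d m (X i) W _ _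
    (fun r => (((hσ1 _).hasDerivAt).const_mul (a r)).const_mul _)

lemma JrowT_eq (d m n k : ℕ) (σ : ℝ → ℝ) (a : Fin m → ℝ)
    (X : Fin n → EuclideanSpace ℝ (Fin d)) (W₀ W : Wts d m) (i : Fin n) :
    JrowT d m n k σ a W₀ X W i
      = (WithLp.toLp 2 (fun r => ((Real.sqrt m)⁻¹ * (a r *
          ∑ j ∈ Finset.range (k + 1), iteratedDeriv j σ ⟪W₀ r, X i⟫ / (j.factorial : ℝ) *
            ((j : ℝ) * (⟪W r, X i⟫ - ⟪W₀ r, X i⟫) ^ (j - 1)))) • X i) : Wts d m) := by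
  apply HasGradientAt.gradient
  have hfun : (fun V => netT d m k σ a W₀ V (X i))
      = fun V : Wts d m => ∑ r, (Real.sqrt m)⁻¹ * (a r *
          ∑ j ∈ Finset.range (k + 1), iteratedDeriv j σ ⟪W₀ r, X i⟫ / (j.factorial : ℝ) *
            (⟪V r, X i⟫ - ⟪W₀ r, X i⟫) ^ j) := by
    funext V; rw [netT, Finset.mul_sum]
    refine Finset.sum_congr rfl fun r _ => ?_
    simp [inner_sub_left]
  rw [hfun]
  refine master_grad d m (X i) W
    (fun r t => (Real.sqrt m)⁻¹ * (a r *
      ∑ j ∈ Finset.range (k + 1), iteratedDeriv j σ ⟪W₀ r, X i⟫ / (j.factorial : ℝ) *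
        (t - ⟪W₀ r, X i⟫) ^ j))
    (fun r => (Real.sqrt m)⁻¹ * (a r *
      ∑ j ∈ Finset.range (k + 1), iteratedDeriv j σ ⟪W₀ r, X i⟫ / (j.factorial : ℝ) *
        ((j : ℝ) * (⟪W r, X i⟫ - ⟪W₀ r, X i⟫) ^ (j - 1)))) (fun r => ?_)
  refine HasDerivAt.const_mul _ (HasDerivAt.const_mul _ ?_)
  apply HasDerivAt.fun_sum
  intro j _
  refine HasDerivAt.const_mul _ ?_
  simpa [Function.comp_def] using (hasDerivAt_pow j (⟪W r, X i⟫ - ⟪W₀ r, X i⟫)).comp (⟪W r, X i⟫ : ℝ)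
    ((hasDerivAt_id (⟪W r, X i⟫ : ℝ)).sub_const (⟪W₀ r, X i⟫ : ℝ))

/-- Jacobian-difference bound on a Frobenius ball (boundedness part of
Lemma A.2(a)). -/
theorem jacobian_difference_on_ball
    (d m n k : ℕ) (hm : 1 ≤ m) (hk : 1 ≤ k) (σ : ℝ → ℝ) (hσ : ContDiff ℝ k σ)
    (L : ℝ) (hlip : ∀ s t : ℝ, |iteratedDeriv k σ s - iteratedDeriv k σ t| ≤ L * |s - t|)
    (a : Fin m → ℝ) (ha : ∀ r, a r = 1 ∨ a r = -1)
    (W₀ : Wts d m) (X : Fin n → EuclideanSpace ℝ (Fin d)) (hX : ∀ i, ‖X i‖ = 1)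
    (C₀ : ℝ) (hC₀ : 0 < C₀) (W : Wts d m) (hball : ‖W - W₀‖ ≤ C₀) :
    Real.sqrt (∑ i, ‖Jrow d m n σ a X W i - JrowT d m n k σ a W₀ X W i‖ ^ 2)
      ≤ L * Real.sqrt n / (k.factorial : ℝ) * C₀ ^ k * (Real.sqrt m)⁻¹ := by
  obtain ⟨q, rfl⟩ : ∃ q, k = q + 1 := ⟨k - 1, (Nat.succ_pred_eq_of_pos hk).symm⟩
  set c : ℝ := (Real.sqrt m)⁻¹ with hc
  have hc0 : 0 ≤ c := inv_nonneg.mpr (Real.sqrt_nonneg _)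
  have hL : 0 ≤ L := le_trans (abs_nonneg _) (by simpa using hlip 1 0)
  have hF0 : (0:ℝ) < ((q+1).factorial : ℝ) := by exact_mod_cast (q+1).factorial_pos
  have hσ1 : Differentiable ℝ σ := hσ.differentiable (by simp)
  have hσ2 : ContDiff ℝ ((q : ℕ∞) + 1) σ := by exact_mod_cast hσ
  have hg' : ContDiff ℝ q (deriv σ) := (contDiff_succ_iff_deriv.mp hσ2).2.2
  have hlip' : ∀ s t : ℝ,
      |iteratedDeriv q (deriv σ) s - iteratedDeriv q (deriv σ) t| ≤ L * |s - t| := by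
    intro s t; rw [← iteratedDeriv_succ']; exact hlip s t
  set y : ℝ := L * C₀ ^ (q+1) / ((q+1).factorial : ℝ) * c with hy
  have hy0 : 0 ≤ y :=
    mul_nonneg (div_nonneg (mul_nonneg hL (pow_nonneg hC₀.le _)) hF0.le) hc0
  -- squared norm of W - W₀ blockwise
  have hWsq : ∑ r : Fin m, ‖W r - W₀ r‖ ^ 2 ≤ C₀ ^ 2 := by
    have h1 : ‖W - W₀‖ ^ 2 = ∑ r : Fin m, ‖(W - W₀) r‖ ^ 2 :=
      PiLp.norm_sq_eq_of_L2 _ (W - W₀)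
    have h2 : ∀ r : Fin m, (W - W₀) r = W r - W₀ r := fun r => rfl
    calc ∑ r : Fin m, ‖W r - W₀ r‖ ^ 2
        = ‖W - W₀‖ ^ 2 := by rw [h1]; exact Finset.sum_congr rfl fun r _ => by rw [h2]
      _ ≤ C₀ ^ 2 := by
          have := pow_le_pow_left₀ (norm_nonneg _) hball 2
          exact this
  have key : ∀ i : Fin n,
      ‖Jrow d m n σ a X W i - JrowT d m n (q+1) σ a W₀ X W i‖ ^ 2 ≤ y ^ 2 := by
    intro i
    set x := X i with hxdef
    set D : Fin m → ℝ := fun r => deriv σ ⟪W r, x⟫ -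
      ∑ j ∈ Finset.range (q+2), iteratedDeriv j σ ⟪W₀ r, x⟫ / (j.factorial : ℝ) *
        ((j : ℝ) * (⟪W r, x⟫ - ⟪W₀ r, x⟫) ^ (j - 1)) with hD
    have hdiff_eq : Jrow d m n σ a X W i - JrowT d m n (q+1) σ a W₀ X W i
        = (WithLp.toLp 2 (fun r => (c * (a r * D r)) • x) : Wts d m) := by
      rw [Jrow_eq d m n σ a X W hσ1 i, JrowT_eq d m n (q+1) σ a X W₀ W i]
      refine PiLp.ext fun r => ?_
      rw [PiLp.sub_apply, PiLp.toLp_apply, PiLp.toLp_apply, PiLp.toLp_apply]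
      rw [← sub_smul]
      congr 1
      rw [hD]
      ring
    -- pointwise bound on D r
    have hDr : ∀ r : Fin m, |D r| ≤ L * ‖W r - W₀ r‖ ^ (q+1) / ((q+1).factorial : ℝ) := by
      intro r
      set b : ℝ := ⟪W₀ r, x⟫ with hb
      set δ : ℝ := ⟪W r, x⟫ - b with hδ
      have hδb : |δ| ≤ ‖W r - W₀ r‖ := by
        have h3 : δ = ⟪W r - W₀ r, x⟫ := by rw [hδ, hb, inner_sub_left]
        rw [h3]
        calc |⟪W r - W₀ r, x⟫| ≤ ‖W r - W₀ r‖ * ‖x‖ := abs_real_inner_le_norm _ _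
          _ = ‖W r - W₀ r‖ := by rw [hX i, mul_one]
      -- reindex the derivative-of-Taylor sum
      have hBr : ∑ j ∈ Finset.range (q+2), iteratedDeriv j σ b / (j.factorial : ℝ) *
            ((j : ℝ) * δ ^ (j - 1))
          = ∑ j ∈ Finset.range (q+1), iteratedDeriv j (deriv σ) b * δ ^ j / (j.factorial : ℝ) := by
        rw [Finset.sum_range_succ' (fun j => iteratedDeriv j σ b / (j.factorial : ℝ) *
          ((j : ℝ) * δ ^ (j - 1))) (q+1)]
        simp only [Nat.cast_zero, zero_mul, mul_zero, add_zero]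
        refine Finset.sum_congr rfl fun j _ => ?_
        rw [← iteratedDeriv_succ']
        simp only [Nat.factorial_succ, Nat.cast_mul, Nat.add_sub_cancel]
        have hj1 : ((j:ℝ) + 1) ≠ 0 := by positivity
        have hjf : ((j.factorial : ℝ)) ≠ 0 := by positivity
        push_cast
        field_simp
      have htay := taylor_remainder_lip L q (deriv σ) hg' hlip' b δ
      have hDval : D r = deriv σ (b + δ) -
          ∑ j ∈ Finset.range (q+1), iteratedDeriv j (deriv σ) b * δ ^ j / (j.factorial : ℝ) := by
        rw [hD]
        simp only [hb.symm, hδ.symm]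
        rw [hBr, hδ, add_sub_cancel]
      rw [hDval]
      calc |deriv σ (b + δ) - ∑ j ∈ Finset.range (q+1),
            iteratedDeriv j (deriv σ) b * δ ^ j / (j.factorial : ℝ)|
          ≤ L * |δ| ^ (q+1) / ((q+1).factorial : ℝ) := htay
        _ ≤ L * ‖W r - W₀ r‖ ^ (q+1) / ((q+1).factorial : ℝ) := by
            have hpow : |δ| ^ (q+1) ≤ ‖W r - W₀ r‖ ^ (q+1) :=
              pow_le_pow_left₀ (abs_nonneg _) hδb _
            exact (div_le_div_iff_of_pos_right hF0).mpr (mul_le_mul_of_nonneg_left hpow hL)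
    -- assemble the per-i bound
    rw [hdiff_eq, PiLp.norm_sq_eq_of_L2]
    have hnorm : ∀ r : Fin m, ‖(c * (a r * D r)) • x‖ = c * |D r| := by
      intro r
      rw [norm_smul, Real.norm_eq_abs, hxdef, hX i, mul_one, abs_mul, abs_mul]
      rcases ha r with h | h <;> rw [h] <;> simp [abs_of_nonneg hc0]
    calc ∑ r : Fin m, ‖(c * (a r * D r)) • x‖ ^ 2
        = ∑ r : Fin m, (c * |D r|) ^ 2 := by
          exact Finset.sum_congr rfl fun r _ => by rw [hnorm r]
      _ ≤ ∑ r : Fin m, (c * (L * ‖W r - W₀ r‖ ^ (q+1) / ((q+1).factorial : ℝ))) ^ 2 := by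
          refine Finset.sum_le_sum fun r _ => ?_
          exact pow_le_pow_left₀ (mul_nonneg hc0 (abs_nonneg _))
            (mul_le_mul_of_nonneg_left (hDr r) hc0) 2
      _ = c ^ 2 * (L / ((q+1).factorial : ℝ)) ^ 2 *
            ∑ r : Fin m, (‖W r - W₀ r‖ ^ 2) ^ (q+1) := by
          rw [Finset.mul_sum]
          refine Finset.sum_congr rfl fun r _ => by ring
      _ ≤ c ^ 2 * (L / ((q+1).factorial : ℝ)) ^ 2 *
            (∑ r : Fin m, ‖W r - W₀ r‖ ^ 2) ^ (q+1) := by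
          refine mul_le_mul_of_nonneg_left
            (sum_pow_le_pow_sum' Finset.univ _ (fun r _ => sq_nonneg _) q) (by positivity)
      _ ≤ c ^ 2 * (L / ((q+1).factorial : ℝ)) ^ 2 * (C₀ ^ 2) ^ (q+1) := by
          refine mul_le_mul_of_nonneg_left
            (pow_le_pow_left₀ (Finset.sum_nonneg fun r _ => sq_nonneg _) hWsq (q+1))
            (by positivity)
      _ = y ^ 2 := by
          rw [hy]; ring
  have hsum : ∑ i, ‖Jrow d m n σ a X W i - JrowT d m n (q+1) σ a W₀ X W i‖ ^ 2
      ≤ (n : ℝ) * y ^ 2 := by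
    calc ∑ i, ‖Jrow d m n σ a X W i - JrowT d m n (q+1) σ a W₀ X W i‖ ^ 2
        ≤ ∑ _i : Fin n, y ^ 2 := Finset.sum_le_sum fun i _ => key i
      _ = (n : ℝ) * y ^ 2 := by
          rw [Finset.sum_const, Finset.card_univ, Fintype.card_fin, nsmul_eq_mul]
  calc Real.sqrt (∑ i, ‖Jrow d m n σ a X W i - JrowT d m n (q+1) σ a W₀ X W i‖ ^ 2)
      ≤ Real.sqrt ((n : ℝ) * y ^ 2) := Real.sqrt_le_sqrt hsum
    _ = Real.sqrt n * y := by
        rw [Real.sqrt_mul (Nat.cast_nonneg n), Real.sqrt_sq hy0]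
    _ = L * Real.sqrt n / ((q+1).factorial : ℝ) * C₀ ^ (q+1) * c := by
        rw [hy]; ring
end
end

section
/- Boundedness of the Taylorized Jacobian on a Frobenius ball (part of Lemma A.2(a)): Assume |σ'(t)| ≤ C₁ for all t, σ is k-times continuously differentiable with σ^{(k)} L-Lipschitz, and ‖x_i‖ = 1 for all i. Then for every C₀ > 0 and every W ∈ (ℝ^d)^m with ‖W − W₀‖_F ≤ C₀: ‖J^{(k)}(W)‖_F ≤ C₁ √n + (L √n / k!) · C₀^k · m^{−1/2}. -/
open scoped BigOperators RealInnerProductSpace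
noncomputable section

section Aux
open scoped BigOperators RealInnerProductSpace


lemma helper_abs (q : ℕ) {φ ψ : ℝ → ℝ} {C : ℝ}
    (hφ0 : φ 0 = 0) (hd : ∀ t, HasDerivAt φ (ψ t) t) (hψc : Continuous ψ)
    (hψ : ∀ t, |ψ t| ≤ C * |t| ^ q) :
    ∀ s : ℝ, 0 ≤ s → |φ s| ≤ C * s ^ (q + 1) / (q + 1) := by
  intro s hs
  have hFTC : ∫ t in (0:ℝ)..s, ψ t = φ s - φ 0 :=
    intervalIntegral.integral_eq_sub_of_hasDerivAt (fun t _ => hd t) (hψc.intervalIntegrable 0 s)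
  have h1 : |φ s| ≤ ∫ t in (0:ℝ)..s, |ψ t| := by
    rw [show φ s = ∫ t in (0:ℝ)..s, ψ t by rw [hFTC, hφ0, sub_zero]]
    simpa using intervalIntegral.norm_integral_le_integral_norm (f := ψ) (a := 0) (b := s) (μ := MeasureTheory.volume) hs
  have h2 : (∫ t in (0:ℝ)..s, |ψ t|) ≤ ∫ t in (0:ℝ)..s, C * t ^ q := by
    apply intervalIntegral.integral_mono_on hs
    · exact (hψc.abs.intervalIntegrable 0 s)
    · exact ((continuous_const.mul (continuous_pow q)).intervalIntegrable 0 s)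
    · intro t ht
      calc |ψ t| ≤ C * |t| ^ q := hψ t
        _ = C * t ^ q := by rw [abs_of_nonneg ht.1]
  have h3 : (∫ t in (0:ℝ)..s, C * t ^ q) = C * s ^ (q + 1) / (q + 1) := by
    rw [intervalIntegral.integral_const_mul, integral_pow]
    ring
  linarith

lemma helper_abs' (q : ℕ) {φ ψ : ℝ → ℝ} {C : ℝ}
    (hφ0 : φ 0 = 0) (hd : ∀ t, HasDerivAt φ (ψ t) t) (hψc : Continuous ψ)
    (hψ : ∀ t, |ψ t| ≤ C * |t| ^ q) (s : ℝ) :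
    |φ s| ≤ C * |s| ^ (q + 1) / (q + 1) := by
  rcases le_or_gt 0 s with hs | hs
  · rw [abs_of_nonneg hs]; exact helper_abs q hφ0 hd hψc hψ s hs
  · have hd' : ∀ t, HasDerivAt (fun t => φ (-t)) (-ψ (-t)) t := by
      intro t
      simpa [Function.comp_def] using HasDerivAt.comp t (hd (-t)) (hasDerivAt_neg t)
    have h := helper_abs q (φ := fun t => φ (-t)) (ψ := fun t => -ψ (-t))
      (by simpa using hφ0) hd' (by continuity)
      (fun t => by simpa [abs_neg] using hψ (-t)) (-s) (by linarith)
    rw [abs_of_neg hs]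
    simpa using h

lemma taylor_lip (L : ℝ) :
    ∀ (p : ℕ) (g : ℝ → ℝ), ContDiff ℝ p g →
      (∀ s t, |iteratedDeriv p g s - iteratedDeriv p g t| ≤ L * |s - t|) →
      ∀ u s : ℝ,
        |g (u + s) - ∑ i ∈ Finset.range (p + 1),
            iteratedDeriv i g u * s ^ i / (i.factorial : ℝ)|
          ≤ L * |s| ^ (p + 1) / ((p + 1).factorial : ℝ) := by
  intro p
  induction p with
  | zero =>
    intro g hg hlip u s
    simpa using hlip (u + s) u
  | succ p ih =>
    intro g hg hlip u s
    have hg' : ContDiff ℝ ((p : WithTop ℕ∞) + 1) g := by exact_mod_cast hg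
    obtain ⟨hdiff, -, hgd⟩ := contDiff_succ_iff_deriv.mp hg'
    have hg1 : Differentiable ℝ g ∧ ContDiff ℝ p (deriv g) := ⟨hdiff, hgd⟩
    have hlip' : ∀ s t, |iteratedDeriv p (deriv g) s - iteratedDeriv p (deriv g) t|
        ≤ L * |s - t| := by
      intro s t
      simpa [← iteratedDeriv_succ'] using hlip s t
    set φ : ℝ → ℝ := fun s => g (u + s) - ∑ i ∈ Finset.range (p + 2),
        iteratedDeriv i g u * s ^ i / (i.factorial : ℝ) with hφdef
    set ψ : ℝ → ℝ := fun t => deriv g (u + t) - ∑ j ∈ Finset.range (p + 1),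
        iteratedDeriv (j+1) g u * t ^ j / (j.factorial : ℝ) with hψdef
    have hφ0 : φ 0 = 0 := by
      simp [hφdef, Finset.sum_eq_single 0, Finset.sum_range_succ']
    have hd : ∀ t, HasDerivAt φ (ψ t) t := by
      intro t
      have h1 : HasDerivAt (fun s => g (u + s)) (deriv g (u + t)) t := by
        simpa [Function.comp_def] using HasDerivAt.comp t ((hg1.1 (u + t)).hasDerivAt) ((hasDerivAt_id t).const_add u)
      have h2 : HasDerivAt (fun s : ℝ => ∑ i ∈ Finset.range (p + 2),
          iteratedDeriv i g u * s ^ i / (i.factorial : ℝ))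
          (∑ i ∈ Finset.range (p + 2),
            iteratedDeriv i g u * ((i : ℝ) * t ^ (i - 1)) / (i.factorial : ℝ)) t := by
        apply HasDerivAt.fun_sum
        intro i _
        simpa [mul_div_assoc, div_mul_eq_mul_div] using
          ((hasDerivAt_pow i t).const_mul (iteratedDeriv i g u)).div_const (i.factorial : ℝ)
      have heq : (∑ i ∈ Finset.range (p + 2),
            iteratedDeriv i g u * ((i : ℝ) * t ^ (i - 1)) / (i.factorial : ℝ))
          = ∑ j ∈ Finset.range (p + 1),
            iteratedDeriv (j+1) g u * t ^ j / (j.factorial : ℝ) := by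
        rw [Finset.sum_range_succ']
        simp only [Nat.cast_zero, zero_mul, mul_zero, zero_div, add_zero]
        apply Finset.sum_congr rfl
        intro j _
        have : ((j+1).factorial : ℝ) = (j+1) * (j.factorial : ℝ) := by
          push_cast [Nat.factorial_succ]; ring
        rw [this]
        have hj : (j.factorial : ℝ) ≠ 0 := by positivity
        field_simp
        rw [Nat.add_sub_cancel]; push_cast; ring
      rw [hψdef]
      have h3 := h1.sub h2
      rw [heq] at h3
      exact h3
    have hψc : Continuous ψ := by
      have : Continuous (deriv g) := hg1.2.continuous
      fun_prop
    have hψb : ∀ t, |ψ t| ≤ (L / ((p+1).factorial : ℝ)) * |t| ^ (p + 1) := by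
      intro t
      have := ih (deriv g) hg1.2 hlip' u t
      have heq2 : (∑ i ∈ Finset.range (p + 1),
          iteratedDeriv i (deriv g) u * t ^ i / (i.factorial : ℝ))
          = ∑ j ∈ Finset.range (p + 1),
            iteratedDeriv (j+1) g u * t ^ j / (j.factorial : ℝ) := by
        apply Finset.sum_congr rfl
        intro j _
        rw [← iteratedDeriv_succ']
      rw [heq2] at this
      calc |ψ t| ≤ L * |t| ^ (p + 1) / ((p+1).factorial : ℝ) := this
        _ = (L / ((p+1).factorial : ℝ)) * |t| ^ (p + 1) := by ring
    have := helper_abs' (p + 1) hφ0 hd hψc hψb s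
    calc |φ s| ≤ (L / ((p+1).factorial : ℝ)) * |s| ^ (p + 2) / ((p + 2 : ℕ) : ℝ) := by
          exact_mod_cast this
      _ = L * |s| ^ (p + 2) / ((p + 2).factorial : ℝ) := by
          have h1 : ((p+2).factorial : ℝ) = (p+2) * ((p+1).factorial : ℝ) := by
            push_cast [Nat.factorial_succ]; ring
          rw [div_mul_eq_mul_div, div_div, h1]
          push_cast
          ring


lemma sum_reindex (σ : ℝ → ℝ) (k : ℕ) (u s : ℝ) :
    (∑ j ∈ Finset.range (k + 1),
        iteratedDeriv j σ u / (j.factorial : ℝ) * ((j : ℝ) * s ^ (j - 1)))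
      = ∑ j ∈ Finset.range k, iteratedDeriv (j + 1) σ u / (j.factorial : ℝ) * s ^ j := by
  rw [Finset.sum_range_succ']
  simp only [Nat.cast_zero, zero_mul, mul_zero, add_zero]
  refine Finset.sum_congr rfl fun j _ => ?_
  have h1 : ((j + 1).factorial : ℝ) = ((j : ℝ) + 1) * (j.factorial : ℝ) := by
    push_cast [Nat.factorial_succ]; ring
  have h2 : (j.factorial : ℝ) ≠ 0 := by positivity
  rw [h1]
  field_simp
  rw [Nat.add_sub_cancel]; push_cast; ring

lemma poly_bound (σ : ℝ → ℝ) (k' : ℕ) (hσ : ContDiff ℝ (k' + 1 : ℕ) σ)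
    {C₁ : ℝ} (hbd : ∀ t : ℝ, |deriv σ t| ≤ C₁)
    {L : ℝ} (hlip : ∀ s t : ℝ,
      |iteratedDeriv (k' + 1) σ s - iteratedDeriv (k' + 1) σ t| ≤ L * |s - t|)
    (u s : ℝ) :
    |∑ j ∈ Finset.range (k' + 1), iteratedDeriv (j + 1) σ u / (j.factorial : ℝ) * s ^ j|
      ≤ C₁ + L * |s| ^ (k' + 1) / ((k' + 1).factorial : ℝ) := by
  have hσ' : ContDiff ℝ ((k' : WithTop ℕ∞) + 1) σ := by exact_mod_cast hσ
  obtain ⟨hdiff, -, hgd⟩ := contDiff_succ_iff_deriv.mp hσ'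
  have hlip' : ∀ s t : ℝ,
      |iteratedDeriv k' (deriv σ) s - iteratedDeriv k' (deriv σ) t| ≤ L * |s - t| := by
    intro s t
    simpa [← iteratedDeriv_succ'] using hlip s t
  have htay := taylor_lip L k' (deriv σ) hgd hlip' u s
  have heq : (∑ i ∈ Finset.range (k' + 1),
        iteratedDeriv i (deriv σ) u * s ^ i / (i.factorial : ℝ))
      = ∑ j ∈ Finset.range (k' + 1),
        iteratedDeriv (j + 1) σ u / (j.factorial : ℝ) * s ^ j := by
    refine Finset.sum_congr rfl fun j _ => ?_
    rw [← iteratedDeriv_succ']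
    ring
  rw [heq] at htay
  have h1 := hbd (u + s)
  calc |∑ j ∈ Finset.range (k' + 1), iteratedDeriv (j + 1) σ u / (j.factorial : ℝ) * s ^ j|
      ≤ |deriv σ (u + s)| + |deriv σ (u + s)
          - ∑ j ∈ Finset.range (k' + 1), iteratedDeriv (j + 1) σ u / (j.factorial : ℝ) * s ^ j| := by
        have h2 := abs_add_le (deriv σ (u + s))
          ((∑ j ∈ Finset.range (k' + 1),
            iteratedDeriv (j + 1) σ u / (j.factorial : ℝ) * s ^ j) - deriv σ (u + s))
        rw [add_sub_cancel] at h2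
        calc |∑ j ∈ Finset.range (k' + 1),
            iteratedDeriv (j + 1) σ u / (j.factorial : ℝ) * s ^ j| ≤ _ := h2
          _ = _ := by rw [abs_sub_comm]
    _ ≤ C₁ + L * |s| ^ (k' + 1) / ((k' + 1).factorial : ℝ) := add_le_add h1 htay

lemma netT_hasGradientAt (d m k : ℕ) (σ : ℝ → ℝ) (a : Fin m → ℝ) (W₀ W : Wts d m)
    (x : EuclideanSpace ℝ (Fin d)) :
    HasGradientAt (fun V => netT d m k σ a W₀ V x)
      (WithLp.toLp 2 fun r => ((Real.sqrt m)⁻¹ * (a r *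
        ∑ j ∈ Finset.range (k + 1),
          iteratedDeriv j σ ⟪W₀ r, x⟫ / (j.factorial : ℝ) *
            ((j : ℝ) * ⟪x, W r - W₀ r⟫ ^ (j - 1)))) • x) W := by
  classical
  rw [hasGradientAt_iff_hasFDerivAt]
  set Lr : Fin m → (Wts d m →L[ℝ] ℝ) := fun r =>
    (innerSL ℝ x).comp (PiLp.proj (𝕜 := ℝ) 2 (fun _ : Fin m => EuclideanSpace ℝ (Fin d)) r) with hLr
  have hbase : ∀ r : Fin m, HasFDerivAt (fun V : Wts d m => (⟪x, V r - W₀ r⟫ : ℝ)) (Lr r) W := by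
    intro r
    have h0 : HasFDerivAt (fun V : Wts d m => V r)
        (PiLp.proj (𝕜 := ℝ) 2 (fun _ : Fin m => EuclideanSpace ℝ (Fin d)) r) W :=
      (PiLp.proj (𝕜 := ℝ) 2 (fun _ : Fin m => EuclideanSpace ℝ (Fin d)) r).hasFDerivAt
    exact (innerSL ℝ x).hasFDerivAt.comp W (h0.sub_const (W₀ r))
  have hterm : ∀ (r : Fin m) (j : ℕ),
      HasFDerivAt (fun V : Wts d m =>
          iteratedDeriv j σ ⟪W₀ r, x⟫ / (j.factorial : ℝ) * (⟪x, V r - W₀ r⟫ : ℝ) ^ j)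
        ((iteratedDeriv j σ ⟪W₀ r, x⟫ / (j.factorial : ℝ)) •
          (((j : ℝ) * (⟪x, W r - W₀ r⟫ : ℝ) ^ (j - 1)) • Lr r)) W := by
    intro r j
    exact (((hasDerivAt_pow j (⟪x, W r - W₀ r⟫ : ℝ)).comp_hasFDerivAt W (hbase r)).const_mul _)
  have hsum : HasFDerivAt (fun V : Wts d m =>
      (Real.sqrt m)⁻¹ * ∑ r : Fin m, a r * ∑ j ∈ Finset.range (k + 1),
        iteratedDeriv j σ ⟪W₀ r, x⟫ / (j.factorial : ℝ) * (⟪x, V r - W₀ r⟫ : ℝ) ^ j)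
      ((Real.sqrt m)⁻¹ • ∑ r : Fin m, (a r) • ∑ j ∈ Finset.range (k + 1),
        (iteratedDeriv j σ ⟪W₀ r, x⟫ / (j.factorial : ℝ)) •
          (((j : ℝ) * (⟪x, W r - W₀ r⟫ : ℝ) ^ (j - 1)) • Lr r)) W :=
    (HasFDerivAt.fun_sum fun r _ =>
      (HasFDerivAt.fun_sum fun j _ => hterm r j).const_mul (a r)).const_mul _
  have hfun : (fun V : Wts d m => netT d m k σ a W₀ V x)
      = fun V : Wts d m =>
        (Real.sqrt m)⁻¹ * ∑ r : Fin m, a r * ∑ j ∈ Finset.range (k + 1),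
          iteratedDeriv j σ ⟪W₀ r, x⟫ / (j.factorial : ℝ) * (⟪x, V r - W₀ r⟫ : ℝ) ^ j := by
    funext V
    unfold netT
    congr 1
    refine Finset.sum_congr rfl fun r _ => ?_
    refine congrArg _ (Finset.sum_congr rfl fun j _ => ?_)
    rw [real_inner_comm (V r - W₀ r) x]
  rw [hfun]
  set G : Wts d m := WithLp.toLp 2 (fun r => ((Real.sqrt m)⁻¹ * (a r *
        ∑ j ∈ Finset.range (k + 1),
          iteratedDeriv j σ ⟪W₀ r, x⟫ / (j.factorial : ℝ) *
            ((j : ℝ) * ⟪x, W r - W₀ r⟫ ^ (j - 1)))) • x) with hG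
  have hD : ((Real.sqrt m)⁻¹ • ∑ r : Fin m, (a r) • ∑ j ∈ Finset.range (k + 1),
        (iteratedDeriv j σ ⟪W₀ r, x⟫ / (j.factorial : ℝ)) •
          (((j : ℝ) * (⟪x, W r - W₀ r⟫ : ℝ) ^ (j - 1)) • Lr r))
      = (InnerProductSpace.toDual ℝ (Wts d m)) G := by
    refine ContinuousLinearMap.ext fun V => ?_
    rw [InnerProductSpace.toDual_apply_apply]
    rw [show (⟪G, V⟫ : ℝ) = ∑ r : Fin m, ⟪G r, V r⟫ from PiLp.inner_apply _ _]
    simp only [hG, hLr, ContinuousLinearMap.smul_apply, ContinuousLinearMap.coe_sum',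
      Finset.sum_apply, ContinuousLinearMap.coe_comp', Function.comp_apply, innerSL_apply_apply,
      smul_eq_mul, PiLp.proj_apply, real_inner_smul_left]
    rw [Finset.mul_sum]
    refine Finset.sum_congr rfl fun r _ => ?_
    simp only [Finset.mul_sum, Finset.sum_mul]
    refine Finset.sum_congr rfl fun j _ => ?_
    ring
  rw [← hD]
  exact hsum

end Aux

/-- boundedness of the Taylorized Jacobian on a Frobenius ball (part of
Lemma A.2(a)). -/
theorem taylorized_jacobian_bounded_on_ball
    (d m n k : ℕ) (hm : 1 ≤ m) (hk : 1 ≤ k) (σ : ℝ → ℝ) (hσ : ContDiff ℝ k σ)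
    (C₁ : ℝ) (hbd : ∀ t : ℝ, |deriv σ t| ≤ C₁)
    (L : ℝ) (hlip : ∀ s t : ℝ, |iteratedDeriv k σ s - iteratedDeriv k σ t| ≤ L * |s - t|)
    (a : Fin m → ℝ) (ha : ∀ r, a r = 1 ∨ a r = -1)
    (W₀ : Wts d m) (X : Fin n → EuclideanSpace ℝ (Fin d)) (hX : ∀ i, ‖X i‖ = 1)
    (C₀ : ℝ) (hC₀ : 0 < C₀) (W : Wts d m) (hball : ‖W - W₀‖ ≤ C₀) :
    Real.sqrt (∑ i, ‖JrowT d m n k σ a W₀ X W i‖ ^ 2)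
      ≤ C₁ * Real.sqrt n + L * Real.sqrt n / (k.factorial : ℝ) * C₀ ^ k * (Real.sqrt m)⁻¹ := by
  obtain ⟨k', rfl⟩ : ∃ k', k = k' + 1 := ⟨k - 1, (Nat.succ_pred_eq_of_pos hk).symm⟩
  have hC₁ : 0 ≤ C₁ := le_trans (abs_nonneg _) (hbd 0)
  have hL : 0 ≤ L := by
    have h0 := hlip 1 0
    have h1 : (0 : ℝ) ≤ L * |(1 : ℝ) - 0| := le_trans (abs_nonneg _) h0
    simpa using h1
  have hm0 : (0 : ℝ) < Real.sqrt m := by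
    have : (1 : ℝ) ≤ (m : ℝ) := by exact_mod_cast hm
    positivity
  set K : ℕ := k' + 1 with hK
  set R : ℝ := C₁ + L / (K.factorial : ℝ) * C₀ ^ K * (Real.sqrt m)⁻¹ with hRdef
  have hRnn : 0 ≤ R := by
    rw [hRdef]
    have : (0:ℝ) ≤ L / (K.factorial : ℝ) * C₀ ^ K * (Real.sqrt m)⁻¹ := by positivity
    linarith
  -- per-row bound
  have hrow : ∀ i, ‖JrowT d m n K σ a W₀ X W i‖ ≤ R := by
    intro i
    set x : EuclideanSpace ℝ (Fin d) := X i with hx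
    have hgrad := netT_hasGradientAt d m K σ a W₀ W x
    set c : Fin m → ℝ := fun r => (Real.sqrt m)⁻¹ * (a r *
      ∑ j ∈ Finset.range (K + 1),
        iteratedDeriv j σ ⟪W₀ r, x⟫ / (j.factorial : ℝ) *
          ((j : ℝ) * ⟪x, W r - W₀ r⟫ ^ (j - 1))) with hc
    set G : Wts d m := WithLp.toLp 2 (fun r => c r • x) with hGdef
    have hJ : JrowT d m n K σ a W₀ X W i = G := hgrad.gradient
    rw [hJ]
    set s : Fin m → ℝ := fun r => ⟪x, W r - W₀ r⟫ with hs
    -- s bounds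
    have hs2 : ∀ r, s r ^ 2 ≤ ‖W r - W₀ r‖ ^ 2 := by
      intro r
      have h1 : |s r| ≤ ‖x‖ * ‖W r - W₀ r‖ := abs_real_inner_le_norm _ _
      rw [hX i] at h1
      rw [one_mul] at h1
      calc s r ^ 2 = |s r| ^ 2 := (sq_abs _).symm
        _ ≤ ‖W r - W₀ r‖ ^ 2 := by
            exact pow_le_pow_left₀ (abs_nonneg _) h1 2
    have hsum2 : ∑ r, s r ^ 2 ≤ C₀ ^ 2 := by
      have h1 : ∑ r, ‖W r - W₀ r‖ ^ 2 = ‖W - W₀‖ ^ 2 := by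
        rw [PiLp.norm_sq_eq_of_L2]
        rfl
      have h2 : ‖W - W₀‖ ^ 2 ≤ C₀ ^ 2 :=
        pow_le_pow_left₀ (norm_nonneg _) hball 2
      calc ∑ r, s r ^ 2 ≤ ∑ r, ‖W r - W₀ r‖ ^ 2 := Finset.sum_le_sum fun r _ => hs2 r
        _ = ‖W - W₀‖ ^ 2 := h1
        _ ≤ C₀ ^ 2 := h2
    have hs2C : ∀ r, s r ^ 2 ≤ C₀ ^ 2 := by
      intro r
      refine le_trans ?_ hsum2
      exact Finset.single_le_sum (f := fun r => s r ^ 2) (fun r _ => sq_nonneg _) (Finset.mem_univ r)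
    -- bound on |c r|
    have hcb : ∀ r, |c r| ≤ (Real.sqrt m)⁻¹ *
        (C₁ + L * |s r| ^ K / (K.factorial : ℝ)) := by
      intro r
      have har : |a r| = 1 := by rcases ha r with h | h <;> simp [h]
      have h1 : (∑ j ∈ Finset.range (K + 1),
          iteratedDeriv j σ ⟪W₀ r, x⟫ / (j.factorial : ℝ) *
            ((j : ℝ) * s r ^ (j - 1)))
          = ∑ j ∈ Finset.range K,
            iteratedDeriv (j + 1) σ ⟪W₀ r, x⟫ / (j.factorial : ℝ) * s r ^ j :=
        sum_reindex σ K ⟪W₀ r, x⟫ (s r)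
      have h2 : |∑ j ∈ Finset.range K,
          iteratedDeriv (j + 1) σ ⟪W₀ r, x⟫ / (j.factorial : ℝ) * s r ^ j|
          ≤ C₁ + L * |s r| ^ K / (K.factorial : ℝ) :=
        poly_bound σ k' hσ hbd hlip ⟪W₀ r, x⟫ (s r)
      rw [hc]
      rw [abs_mul, abs_mul, har, one_mul,
        abs_of_nonneg (inv_nonneg.mpr (Real.sqrt_nonneg _))]
      refine mul_le_mul_of_nonneg_left ?_ (inv_nonneg.mpr (Real.sqrt_nonneg _))
      rw [h1]
      exact h2
    -- norm of the row
    have hnorm2 : ‖G‖ ^ 2 = ∑ r, c r ^ 2 := by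
      rw [PiLp.norm_sq_eq_of_L2]
      refine Finset.sum_congr rfl fun r _ => ?_
      show ‖c r • x‖ ^ 2 = c r ^ 2
      rw [norm_smul, hX i, Real.norm_eq_abs, mul_one, sq_abs]
    set A : EuclideanSpace ℝ (Fin m) := WithLp.toLp 2 fun _ => C₁ with hA
    set B : EuclideanSpace ℝ (Fin m) := WithLp.toLp 2 fun r => L * |s r| ^ K / (K.factorial : ℝ) with hB
    have hABnn : ∀ r, 0 ≤ A r + B r := by
      intro r
      have : (0:ℝ) ≤ L * |s r| ^ K / (K.factorial : ℝ) := by positivity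
      simp only [hA, hB]
      linarith
    have hsumc : ∑ r, c r ^ 2 ≤ (Real.sqrt m)⁻¹ ^ 2 * ∑ r, (A r + B r) ^ 2 := by
      rw [Finset.mul_sum]
      refine Finset.sum_le_sum fun r _ => ?_
      have h1 : |c r| ≤ (Real.sqrt m)⁻¹ * (A r + B r) := hcb r
      calc c r ^ 2 = |c r| ^ 2 := (sq_abs _).symm
        _ ≤ ((Real.sqrt m)⁻¹ * (A r + B r)) ^ 2 := pow_le_pow_left₀ (abs_nonneg _) h1 2
        _ = (Real.sqrt m)⁻¹ ^ 2 * (A r + B r) ^ 2 := by ring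
    have hAB2 : ∑ r, (A r + B r) ^ 2 = ‖A + B‖ ^ 2 := by
      rw [PiLp.norm_sq_eq_of_L2]
      refine (Finset.sum_congr rfl fun r _ => ?_).symm
      show ‖A r + B r‖ ^ 2 = (A r + B r) ^ 2
      rw [Real.norm_eq_abs, sq_abs]
    have hnA : ‖A‖ = Real.sqrt m * C₁ := by
      have : ‖A‖ ^ 2 = (m : ℝ) * C₁ ^ 2 := by
        rw [PiLp.norm_sq_eq_of_L2]
        simp [hA, Real.norm_eq_abs, sq_abs, Finset.sum_const, Finset.card_univ]
      have h2 : ‖A‖ = Real.sqrt ((m : ℝ) * C₁ ^ 2) := by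
        rw [← this, Real.sqrt_sq (norm_nonneg _)]
      rw [h2, Real.sqrt_mul (Nat.cast_nonneg m), Real.sqrt_sq hC₁]
    have hnB : ‖B‖ ≤ L / (K.factorial : ℝ) * C₀ ^ K := by
      have hB2 : ‖B‖ ^ 2 ≤ (L / (K.factorial : ℝ) * C₀ ^ K) ^ 2 := by
        rw [PiLp.norm_sq_eq_of_L2]
        have hterm : ∀ r : Fin m, ‖B r‖ ^ 2 ≤ (L / (K.factorial : ℝ)) ^ 2 *
            ((C₀ ^ 2) ^ k' * s r ^ 2) := by
          intro r
          have h1 : ‖B r‖ ^ 2 = (L / (K.factorial : ℝ)) ^ 2 * (s r ^ 2) ^ K := by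
            rw [Real.norm_eq_abs, sq_abs, hB]
            rw [show (s r ^ 2) ^ K = (|s r| ^ K) ^ 2 by
              rw [← sq_abs (s r), ← pow_mul, ← pow_mul, Nat.mul_comm]]
            ring
          rw [h1]
          refine mul_le_mul_of_nonneg_left ?_ (by positivity)
          calc (s r ^ 2) ^ K = (s r ^ 2) ^ k' * s r ^ 2 := by rw [hK, pow_succ]
            _ ≤ (C₀ ^ 2) ^ k' * s r ^ 2 := by
                refine mul_le_mul_of_nonneg_right ?_ (sq_nonneg _)
                exact pow_le_pow_left₀ (sq_nonneg _) (hs2C r) k'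
        calc ∑ r, ‖B r‖ ^ 2 ≤ ∑ r, (L / (K.factorial : ℝ)) ^ 2 *
              ((C₀ ^ 2) ^ k' * s r ^ 2) := Finset.sum_le_sum fun r _ => hterm r
          _ = (L / (K.factorial : ℝ)) ^ 2 * (C₀ ^ 2) ^ k' * ∑ r, s r ^ 2 := by
              rw [Finset.mul_sum]
              refine Finset.sum_congr rfl fun r _ => by ring
          _ ≤ (L / (K.factorial : ℝ)) ^ 2 * (C₀ ^ 2) ^ k' * C₀ ^ 2 := by
              refine mul_le_mul_of_nonneg_left hsum2 (by positivity)
          _ = (L / (K.factorial : ℝ) * C₀ ^ K) ^ 2 := by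
              rw [hK]
              ring
      have h3 := Real.sqrt_le_sqrt hB2
      rwa [Real.sqrt_sq (norm_nonneg _), Real.sqrt_sq (by positivity)] at h3
    -- combine
    have hfinal : ‖G‖ ≤ (Real.sqrt m)⁻¹ * (‖A‖ + ‖B‖) := by
      have h1 : ‖G‖ ^ 2 ≤ ((Real.sqrt m)⁻¹ * ‖A + B‖) ^ 2 := by
        rw [hnorm2]
        calc ∑ r, c r ^ 2 ≤ (Real.sqrt m)⁻¹ ^ 2 * ∑ r, (A r + B r) ^ 2 := hsumc
          _ = ((Real.sqrt m)⁻¹ * ‖A + B‖) ^ 2 := by rw [hAB2]; ring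
      have h2 := Real.sqrt_le_sqrt h1
      rw [Real.sqrt_sq (norm_nonneg _), Real.sqrt_sq (by positivity)] at h2
      refine h2.trans ?_
      refine mul_le_mul_of_nonneg_left (norm_add_le A B) (by positivity)
    refine hfinal.trans ?_
    rw [hnA, hRdef]
    have hmm : (Real.sqrt m)⁻¹ * (Real.sqrt m * C₁) = C₁ := by
      field_simp
    calc (Real.sqrt m)⁻¹ * (Real.sqrt m * C₁ + ‖B‖)
        ≤ (Real.sqrt m)⁻¹ * (Real.sqrt m * C₁ + L / (K.factorial : ℝ) * C₀ ^ K) := by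
          refine mul_le_mul_of_nonneg_left (by linarith) (by positivity)
      _ = C₁ + L / (K.factorial : ℝ) * C₀ ^ K * (Real.sqrt m)⁻¹ := by
          rw [mul_add, hmm]
          ring
  -- sum over rows
  have h1 : ∑ i, ‖JrowT d m n K σ a W₀ X W i‖ ^ 2 ≤ (n : ℝ) * R ^ 2 := by
    calc ∑ i, ‖JrowT d m n K σ a W₀ X W i‖ ^ 2
        ≤ ∑ _i : Fin n, R ^ 2 := Finset.sum_le_sum fun i _ =>
          pow_le_pow_left₀ (norm_nonneg _) (hrow i) 2
      _ = (n : ℝ) * R ^ 2 := by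
          rw [Finset.sum_const, Finset.card_univ]
          simp [nsmul_eq_mul]
  calc Real.sqrt (∑ i, ‖JrowT d m n K σ a W₀ X W i‖ ^ 2)
      ≤ Real.sqrt ((n : ℝ) * R ^ 2) := Real.sqrt_le_sqrt h1
    _ = Real.sqrt n * R := by
        rw [Real.sqrt_mul (Nat.cast_nonneg n), Real.sqrt_sq hRnn]
    _ = C₁ * Real.sqrt n + L * Real.sqrt n / (K.factorial : ℝ) * C₀ ^ K * (Real.sqrt m)⁻¹ := by
        rw [hRdef]
        ring
end
end
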